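/- arXiv:1011.3058 — 4 statements merged into one kernel-verified Lean document; each statement's English description precedes it below -/
import Mathlib

section
/- If T is a finite tree with maximum degree d_max and depth D (rooted at some vertex), then the partition width of T satisfies PW(T) ≤ d_max · D. -/
open Finset
open scoped Classical

/-- A hierarchical partition of a finite vertex set: a rooted binary tree whose root is the
given set, whose leaves are singletons, and in which every internal node is the disjoint
union of its two (nonempty) children. -/
inductive HPart (α : Type*) [DecidableEq α] : Finset α → Type _
  | leaf (x : α) : HPart α {x}
  | node (s t : Finset α) (hst : Disjoint s t) (hs : s.Nonempty) (ht : t.Nonempty)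
      (l : HPart α s) (r : HPart α t) : HPart α (s ∪ t)

variable {α : Type*} [DecidableEq α]

/-- The number of edges of `G` between the disjoint sets `s` and `t`. -/
noncomputable def crossCount (G : SimpleGraph α) (s t : Finset α) : ℕ :=
  ((s ×ˢ t).filter fun p => G.Adj p.1 p.2).card

/-- The cost of a hierarchical partition: the weight of an internal node is the number of
edges between its two children, and the cost is the maximum over vertices of the sum of
node weights along the root-to-leaf path (computed recursively). -/
noncomputable def HPart.cost (G : SimpleGraph α) : {s : Finset α} → HPart α s → ℕ
  | _, .leaf _ => 0
  | _, .node s t _ _ _ l r => crossCount G s t + max (l.cost G) (r.cost G)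

/-- The partition width of (the subgraph of `G` induced by) a finite vertex set `s`:
the minimum cost over all hierarchical partitions of `s`. -/
noncomputable def PW (G : SimpleGraph α) (s : Finset α) : ℕ :=
  sInf {n | ∃ P : HPart α s, P.cost G = n}

lemma crossCount_le_of_singleton [Fintype α] (G : SimpleGraph α) (v : α) (t : Finset α) :
    crossCount G {v} t ≤ (Finset.univ.filter fun w => G.Adj v w).card := by
  unfold crossCount
  apply Finset.card_le_card_of_injOn (fun p => p.2)
  · rintro ⟨a, b⟩ hp
    simp only [Finset.mem_coe, Finset.mem_filter, Finset.mem_product, Finset.mem_singleton] at hp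
    simp only [Finset.mem_coe, Finset.mem_filter, Finset.mem_univ, true_and]
    rw [← hp.1.1]; exact hp.2
  · rintro ⟨a, b⟩ ha ⟨a', b'⟩ hb h
    simp only [Finset.coe_filter, Set.mem_setOf_eq, Finset.mem_product,
      Finset.mem_singleton] at ha hb
    simp only at h
    exact Prod.ext (ha.1.1.trans hb.1.1.symm) h

lemma crossCount_eq_zero (G : SimpleGraph α) {s t : Finset α}
    (h : ∀ x ∈ s, ∀ y ∈ t, ¬ G.Adj x y) : crossCount G s t = 0 := by
  unfold crossCount
  rw [Finset.card_eq_zero, Finset.filter_eq_empty_iff]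
  rintro ⟨x, y⟩ hxy
  rw [Finset.mem_product] at hxy
  exact h x hxy.1 y hxy.2

open SimpleGraph in
lemma key_hpart [Fintype α] (G : SimpleGraph α) (hac : G.IsAcyclic) (dmax : ℕ)
    (hdeg : ∀ v, (Finset.univ.filter fun w => G.Adj v w).card ≤ dmax) :
    ∀ (k : ℕ) (s : Finset α) (v : α) (n : ℕ), s.card ≤ k → v ∈ s →
      (∀ w ∈ s, ∃ p : G.Walk v w, p.length ≤ n ∧ ∀ y ∈ p.support, y ∈ s) →
      ∃ P : HPart α s, P.cost G ≤ dmax * n := by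
  intro k
  induction k using Nat.strong_induction_on with
  | _ k IHk =>
  intro s v n hsk hvs H
  by_cases hcard : s.card ≤ 1
  · -- s = {v}
    have hs : s = {v} := by
      apply Finset.eq_singleton_iff_unique_mem.mpr
      refine ⟨hvs, fun y hy => ?_⟩
      by_contra hne
      have : 1 < s.card := Finset.one_lt_card.mpr ⟨y, hy, v, hvs, hne⟩
      omega
    subst hs
    exact ⟨HPart.leaf v, Nat.zero_le _⟩
  · set rest : Finset α := s \ {v} with hrest
    have hvnotrest : v ∉ rest := by simp [hrest]
    have hrestsub : rest ⊆ s := Finset.sdiff_subset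
    have hrestcard : rest.card = s.card - 1 := by
      rw [hrest, Finset.card_sdiff_of_subset (Finset.singleton_subset_iff.mpr hvs), Finset.card_singleton]
    have hrestne : rest.Nonempty := by
      rw [← Finset.card_pos]; omega
    -- n ≥ 1
    have hn : 1 ≤ n := by
      obtain ⟨w0, hw0⟩ := hrestne
      have hw0v : w0 ≠ v := by
        intro h; rw [h] at hw0; exact hvnotrest hw0
      obtain ⟨p, hpl, -⟩ := H w0 (hrestsub hw0)
      rcases Nat.eq_zero_or_pos p.length with h0 | h0
      · exact absurd (Walk.eq_of_length_eq_zero h0).symm hw0v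
      · omega
    -- reachability within rest
    set Rch : α → α → Prop := fun a b => ∃ q : G.Walk a b, ∀ z ∈ q.support, z ∈ rest
      with hRch
    have hRsymm : ∀ a b, Rch a b → Rch b a := by
      rintro a b ⟨q, hq⟩
      refine ⟨q.reverse, fun z hz => hq z ?_⟩
      rwa [Walk.support_reverse, List.mem_reverse] at hz
    have hRtrans : ∀ a b c, Rch a b → Rch b c → Rch a c := by
      rintro a b c ⟨q, hq⟩ ⟨q', hq'⟩
      refine ⟨q.append q', fun z hz => ?_⟩
      rcases (Walk.mem_support_append_iff _ _).mp hz with h | h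
      · exact hq z h
      · exact hq' z h
    -- branch extraction
    have hbr : ∀ x ∈ rest, ∃ (c : α) (q : G.Walk c x), G.Adj v c ∧ q.IsPath ∧
        q.length ≤ n - 1 ∧ ∀ y ∈ q.support, y ∈ rest := by
      intro x hx
      have hxs : x ∈ s := hrestsub hx
      have hxv : x ≠ v := by
        intro h; rw [h] at hx; exact hvnotrest hx
      obtain ⟨p, hpl, hps⟩ := H x hxs
      have hpbp : p.bypass.IsPath := p.bypass_isPath
      have hpbl : p.bypass.length ≤ n := le_trans p.length_bypass_le hpl
      have hpbs : ∀ y ∈ p.bypass.support, y ∈ s := fun y hy =>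
        hps y (p.support_bypass_subset hy)
      revert hpbp hpbl hpbs
      generalize p.bypass = pb
      intro hpbp hpbl hpbs
      cases pb with
      | nil => exact absurd rfl hxv.symm
      | cons hadj q =>
        rw [Walk.cons_isPath_iff] at hpbp
        refine ⟨_, q, hadj, hpbp.1, ?_, ?_⟩
        · have := Walk.length_cons hadj q ▸ hpbl; omega
        · intro y hy
          rw [hrest, Finset.mem_sdiff]
          refine ⟨hpbs y (by rw [Walk.support_cons]; exact List.mem_cons_of_mem _ hy), ?_⟩
          simp only [Finset.mem_singleton]
          intro h; rw [h] at hy; exact hpbp.2 hy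
    -- uniqueness of the branch root
    have huniq : ∀ (c c' : α), G.Adj v c → G.Adj v c' → Rch c c' → c = c' := by
      rintro c c' hc hc' ⟨W, hW⟩
      have hvW : v ∉ W.bypass.support := by
        intro hv
        exact hvnotrest (hW v (W.support_bypass_subset hv))
      have heq := hac.path_unique
        (⟨Walk.cons hc W.bypass, W.bypass_isPath.cons hvW⟩ : G.Path v c')
        (SimpleGraph.Path.singleton hc')
      have hlen := congrArg (fun P : G.Path v c' => (P : G.Walk v c').length) heq
      simp only [SimpleGraph.Path.singleton, Walk.length_cons, Walk.length_nil] at hlen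
      exact Walk.eq_of_length_eq_zero (p := W.bypass) (by omega)
    -- peel off components of a union-of-components set t
    have M : ∀ (m : ℕ) (t : Finset α), t.card ≤ m → t.Nonempty → t ⊆ rest →
        (∀ x ∈ t, ∀ y, Rch x y → y ∈ t) →
        ∃ P : HPart α t, P.cost G ≤ dmax * (n - 1) := by
      intro m
      induction m with
      | zero =>
        intro t htm htne _ _
        exact absurd (Finset.card_pos.mpr htne) (by omega)
      | succ m IHm =>
        intro t htm htne hts hclosed
        obtain ⟨w, hwt⟩ := htne
        have hwrest : w ∈ rest := hts hwt
        set C : Finset α := rest.filter (fun x => Rch w x) with hC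
        have hCrest : C ⊆ rest := Finset.filter_subset _ _
        have hCt : C ⊆ t := fun x hx => by
          rw [hC, Finset.mem_filter] at hx
          exact hclosed w hwt x hx.2
        have hwC : w ∈ C := by
          rw [hC, Finset.mem_filter]
          exact ⟨hwrest, Walk.nil, fun z hz => by
            rw [Walk.support_nil, List.mem_singleton] at hz; rwa [hz]⟩
        obtain ⟨c, q0, hvc, hq0p, hq0l, hq0s⟩ := hbr w hwrest
        have hcrest : c ∈ rest := hq0s c q0.start_mem_support
        have hRwc : Rch w c := hRsymm c w ⟨q0, hq0s⟩
        have hcC : c ∈ C := by rw [hC, Finset.mem_filter]; exact ⟨hcrest, hRwc⟩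
        have hroot : ∀ x ∈ C, ∃ p : G.Walk c x, p.length ≤ n - 1 ∧
            ∀ y ∈ p.support, y ∈ C := by
          intro x hx
          rw [hC, Finset.mem_filter] at hx
          obtain ⟨hxrest, hRwx⟩ := hx
          obtain ⟨c', q, hvc', hqp, hql, hqs⟩ := hbr x hxrest
          have hcc : c' = c :=
            huniq c' c hvc' hvc
              (hRtrans _ _ _ ⟨q, hqs⟩ (hRtrans _ _ _ (hRsymm _ _ hRwx) hRwc))
          subst hcc
          refine ⟨q, hql, fun y hy => ?_⟩
          rw [hC, Finset.mem_filter]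
          refine ⟨hqs y hy, ?_⟩
          have hRyx : Rch y x :=
            ⟨q.dropUntil y hy, fun z hz => hqs z (q.support_dropUntil_subset hy hz)⟩
          exact hRtrans _ _ _ hRwx (hRsymm _ _ hRyx)
        have hrestlt : rest.card < s.card := by omega
        have hCk : C.card < k :=
          lt_of_lt_of_le (lt_of_le_of_lt (Finset.card_le_card hCrest) hrestlt) hsk
        obtain ⟨PC, hPC⟩ := IHk C.card hCk C c (n - 1) le_rfl hcC hroot
        by_cases hTC : t \ C = ∅
        · have ht : t = C :=
            Finset.Subset.antisymm (Finset.sdiff_eq_empty_iff_subset.mp hTC) hCt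
          rw [ht]
          exact ⟨PC, hPC⟩
        · have htne' : (t \ C).Nonempty := Finset.nonempty_iff_ne_empty.mpr hTC
          have hcard' : (t \ C).card ≤ m := by
            have h1 : (t \ C).card = t.card - C.card := Finset.card_sdiff_of_subset hCt
            have h2 : 0 < C.card := Finset.card_pos.mpr ⟨w, hwC⟩
            omega
          have hclosed' : ∀ x ∈ t \ C, ∀ y, Rch x y → y ∈ t \ C := by
            intro x hx y hxy
            rw [Finset.mem_sdiff] at hx ⊢
            refine ⟨hclosed x hx.1 y hxy, fun hyC => hx.2 ?_⟩
            rw [hC, Finset.mem_filter] at hyC ⊢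
            exact ⟨hts hx.1, hRtrans _ _ _ hyC.2 (hRsymm _ _ hxy)⟩
          obtain ⟨PR, hPR⟩ := IHm (t \ C) hcard' htne'
            (fun x hx => hts (Finset.sdiff_subset hx)) hclosed'
          have hdisj : Disjoint C (t \ C) := Finset.disjoint_sdiff
          have hcross : crossCount G C (t \ C) = 0 := by
            apply crossCount_eq_zero
            intro x hx y hy hadj
            rw [Finset.mem_sdiff] at hy
            apply hy.2
            rw [hC, Finset.mem_filter] at hx ⊢
            refine ⟨hts hy.1, hRtrans _ _ _ hx.2 ⟨hadj.toWalk, ?_⟩⟩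
            intro z hz
            simp only [Adj.toWalk, Walk.support_cons, Walk.support_nil,
              List.mem_cons, List.mem_singleton] at hz
            rcases hz with h | h | h
            · rw [h]; exact hx.1
            · rw [h]; exact hts hy.1
            · exact absurd h (by simp)
          have hunion : C ∪ (t \ C) = t := Finset.union_sdiff_of_subset hCt
          rw [← hunion]
          refine ⟨HPart.node C (t \ C) hdisj ⟨w, hwC⟩ htne' PC PR, ?_⟩
          simp only [HPart.cost, hcross, Nat.zero_add]
          exact max_le hPC hPR
    -- assemble the root split
    obtain ⟨PM, hPM⟩ := M rest.card rest le_rfl hrestne Finset.Subset.rfl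
      (fun x hx y ⟨q, hq⟩ => hq y q.end_mem_support)
    have hdisj : Disjoint {v} rest := Finset.disjoint_sdiff
    have hunion : {v} ∪ rest = s :=
      Finset.union_sdiff_of_subset (Finset.singleton_subset_iff.mpr hvs)
    rw [← hunion]
    refine ⟨HPart.node {v} rest hdisj (Finset.singleton_nonempty v) hrestne (HPart.leaf v) PM, ?_⟩
    simp only [HPart.cost]
    have h1 : crossCount G {v} rest ≤ dmax :=
      le_trans (crossCount_le_of_singleton G v rest) (hdeg v)
    have h2 : max 0 (PM.cost G) ≤ dmax * (n - 1) := by simpa using hPM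
    obtain ⟨m, rfl⟩ : ∃ m, n = m + 1 := ⟨n - 1, by omega⟩
    have h3 : dmax * (m + 1) = dmax * m + dmax := by ring
    simp only [Nat.add_sub_cancel] at h2
    omega

/-- If `T` is a finite tree with maximum degree `d_max` and depth `D`
(rooted at some vertex `r`, i.e. every vertex is within distance `D` of `r`), then
`PW(T) ≤ d_max · D`. -/
theorem stmt_2 {α : Type*} [Fintype α] [DecidableEq α] (T : SimpleGraph α)
    (hT : T.IsTree) (dmax D : ℕ) (r : α)
    (hdeg : ∀ v, (Finset.univ.filter fun w => T.Adj v w).card ≤ dmax)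
    (hdepth : ∀ v, T.dist r v ≤ D) :
    PW T Finset.univ ≤ dmax * D := by
  have hwalks : ∀ w ∈ (Finset.univ : Finset α), ∃ p : T.Walk r w,
      p.length ≤ D ∧ ∀ y ∈ p.support, y ∈ (Finset.univ : Finset α) := by
    intro w _
    obtain ⟨p, hp⟩ := hT.isConnected.exists_walk_length_eq_dist r w
    exact ⟨p, by rw [hp]; exact hdepth w, fun y _ => Finset.mem_univ y⟩
  obtain ⟨P, hP⟩ := key_hpart T hT.IsAcyclic dmax hdeg (Fintype.card α)
    Finset.univ r D (le_of_eq Finset.card_univ) (Finset.mem_univ r) hwalks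
  exact le_trans (Nat.sInf_le ⟨P, rfl⟩) hP
end

section
/- In the random cluster model on a finite 2d-regular graph G=(V,E) with parameters p = 1 − e^{−β} and q, the unnormalized weight w(A) = p^{|A|}(1−p)^{|E\A|} q^{c(A)} of a configuration A ⊆ E can be rewritten as w(A) = q^{c̃(A)} · e^{−e_dis·|V\V(A)|} · e^{−e_ord·|V(A)|} · e^{−κ·‖δA‖}, where e_dis = dβ − log q, e_ord = −d·log(1 − e^{−β}), κ = (1/2)·log(e^β − 1), and ‖δA‖ = |δ₁A| + 2|δ₂A|. -/
open Finset
open scoped Classical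

variable {V : Type*} [Fintype V] [DecidableEq V]

/-- The set of vertices incident to at least one edge of `A`. -/
noncomputable def vertSet (A : Finset (Sym2 V)) : Finset V :=
  Finset.univ.filter fun v => ∃ e ∈ A, v ∈ e

/-- `c(A)`: the number of connected components of the graph `(V, A)` (isolated vertices
count as components). -/
noncomputable def compCount (A : Finset (Sym2 V)) : ℕ :=
  Nat.card (SimpleGraph.fromEdgeSet (↑A : Set (Sym2 V))).ConnectedComponent

/-- `c̃(A)`: the number of connected components of the graph `(V(A), A)`. -/
noncomputable def compCount' (A : Finset (Sym2 V)) : ℕ :=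
  Nat.card ((SimpleGraph.fromEdgeSet (↑A : Set (Sym2 V))).induce
    (↑(vertSet A) : Set V)).ConnectedComponent

/-- `δₖA`: the set of edges of `E \ A` having exactly `k` endpoints in `V(A)`. -/
noncomputable def deltaK (G : SimpleGraph V) (A : Finset (Sym2 V)) (k : ℕ) :
    Finset (Sym2 V) :=
  Finset.univ.filter fun e : Sym2 V =>
    e ∈ G.edgeSet ∧ e ∉ A ∧ ((vertSet A).filter fun v => v ∈ e).card = k

/-- The degree of a vertex. -/
noncomputable def deg (G : SimpleGraph V) (v : V) : ℕ :=
  (Finset.univ.filter fun w => G.Adj v w).card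


section Helpers

variable {V : Type*} [Fintype V] [DecidableEq V]

lemma mem_vertSet_iff {A : Finset (Sym2 V)} {v : V} :
    v ∈ vertSet A ↔ ∃ e ∈ A, v ∈ e := by simp [vertSet]

lemma adj_mem_vertSet {A : Finset (Sym2 V)} {x y : V}
    (h : (SimpleGraph.fromEdgeSet (↑A : Set (Sym2 V))).Adj x y) : x ∈ vertSet A := by
  rw [SimpleGraph.fromEdgeSet_adj] at h
  exact mem_vertSet_iff.2 ⟨s(x, y), by exact_mod_cast h.1, by simp⟩

lemma isolated_reachable {A : Finset (Sym2 V)} {v w : V}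
    (hv : v ∉ vertSet A)
    (h : (SimpleGraph.fromEdgeSet (↑A : Set (Sym2 V))).Reachable v w) : v = w := by
  obtain ⟨p⟩ := h
  cases p with
  | nil => rfl
  | cons h p => exact absurd (adj_mem_vertSet h) hv

lemma walk_induce {A : Finset (Sym2 V)} :
    ∀ {u w : V}, (SimpleGraph.fromEdgeSet (↑A : Set (Sym2 V))).Walk u w →
      ∀ (hu : u ∈ (↑(vertSet A) : Set V)) (hw : w ∈ (↑(vertSet A) : Set V)),
      ((SimpleGraph.fromEdgeSet (↑A : Set (Sym2 V))).induce
        (↑(vertSet A) : Set V)).Reachable ⟨u, hu⟩ ⟨w, hw⟩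
  | _, _, .nil, hu, hw => SimpleGraph.Reachable.refl _
  | u, w, .cons (v := b) hab p, hu, hw => by
      have hb : b ∈ (↑(vertSet A) : Set V) := by
        simpa using adj_mem_vertSet hab.symm
      have hadj : ((SimpleGraph.fromEdgeSet (↑A : Set (Sym2 V))).induce
          (↑(vertSet A) : Set V)).Adj ⟨u, hu⟩ ⟨b, hb⟩ := by
        simpa [SimpleGraph.comap_adj] using hab
      exact hadj.reachable.trans (walk_induce p hb hw)

lemma compCount_eq (A : Finset (Sym2 V)) :
    compCount A = compCount' A + (Finset.univ \ vertSet A).card := by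
  classical
  set H := SimpleGraph.fromEdgeSet (↑A : Set (Sym2 V)) with hH
  set s : Set V := (↑(vertSet A) : Set V) with hs
  let emb := SimpleGraph.Embedding.induce (G := H) s
  let f : (H.induce s).ConnectedComponent ⊕ {v // v ∈ Finset.univ \ vertSet A} →
      H.ConnectedComponent :=
    Sum.elim (fun c => c.map emb.toHom) (fun v => H.connectedComponentMk v.1)
  have hnot : ∀ v : {v // v ∈ Finset.univ \ vertSet A}, v.1 ∉ vertSet A := by
    intro v; have := v.2; simp only [Finset.mem_sdiff, Finset.mem_univ, true_and] at this
    exact this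
  have hbij : Function.Bijective f := by
    constructor
    · rintro (c | v) (c' | v') h
      · obtain ⟨u, rfl⟩ := c.exists_rep
        obtain ⟨u', rfl⟩ := c'.exists_rep
        simp only [f, Sum.elim_inl, SimpleGraph.ConnectedComponent.map_mk] at h
        have hreach : H.Reachable ↑u ↑u' := SimpleGraph.ConnectedComponent.eq.1 h
        obtain ⟨pw⟩ := hreach
        apply congrArg Sum.inl
        exact SimpleGraph.ConnectedComponent.eq.2 (walk_induce pw u.2 u'.2)
      · exfalso
        obtain ⟨u, rfl⟩ := c.exists_rep
        simp only [f, Sum.elim_inl, Sum.elim_inr, SimpleGraph.ConnectedComponent.map_mk] at h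
        have hreach : H.Reachable v'.1 ↑u := (SimpleGraph.ConnectedComponent.eq.1 h).symm
        have heq := isolated_reachable (hnot v') hreach
        have hu : (↑u : V) ∈ vertSet A := u.2
        rw [← heq] at hu
        exact (hnot v') hu
      · exfalso
        obtain ⟨u, rfl⟩ := c'.exists_rep
        simp only [f, Sum.elim_inl, Sum.elim_inr, SimpleGraph.ConnectedComponent.map_mk] at h
        have hreach : H.Reachable v.1 ↑u := SimpleGraph.ConnectedComponent.eq.1 h
        have heq := isolated_reachable (hnot v) hreach
        have hu : (↑u : V) ∈ vertSet A := u.2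
        rw [← heq] at hu
        exact (hnot v) hu
      · simp only [f, Sum.elim_inr] at h
        have hreach : H.Reachable v.1 v'.1 := SimpleGraph.ConnectedComponent.eq.1 h
        have heq := isolated_reachable (hnot v) hreach
        simp only [Sum.inr.injEq]
        exact Subtype.ext heq
    · intro c
      obtain ⟨v, rfl⟩ := c.exists_rep
      by_cases hv : v ∈ vertSet A
      · refine ⟨Sum.inl ((H.induce s).connectedComponentMk ⟨v, by simpa [hs] using hv⟩), ?_⟩
        simp only [f, Sum.elim_inl, SimpleGraph.ConnectedComponent.map_mk]
        rfl
      · exact ⟨Sum.inr ⟨v, by simp [hv]⟩, rfl⟩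
  have hcard := Nat.card_congr (Equiv.ofBijective f hbij)
  rw [Nat.card_sum, Nat.card_eq_finsetCard] at hcard
  rw [compCount, compCount']
  exact hcard.symm

lemma deg_eq_degree (G : SimpleGraph V) (v : V) : deg G v = G.degree v := by
  classical
  rw [deg, SimpleGraph.degree]
  congr 1
  ext w
  simp [SimpleGraph.mem_neighborFinset]

lemma edge_count (G : SimpleGraph V) {E : Finset (Sym2 V)}
    (hE : E = Finset.univ.filter fun e => e ∈ G.edgeSet) :
    2 * E.card = ∑ v, deg G v := by
  classical
  have hEF : E = G.edgeFinset := by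
    ext e; simp [hE, SimpleGraph.mem_edgeFinset]
  rw [hEF]
  simp only [deg_eq_degree]
  rw [SimpleGraph.sum_degrees_eq_twice_card_edges]

lemma deg_eq_card_incident (G : SimpleGraph V) {E : Finset (Sym2 V)}
    (hE : E = Finset.univ.filter fun e => e ∈ G.edgeSet) (v : V) :
    deg G v = (E.filter fun e => v ∈ e).card := by
  classical
  rw [deg_eq_degree, ← SimpleGraph.card_incidenceFinset_eq_degree]
  congr 1
  ext e
  simp [SimpleGraph.mem_incidenceFinset, SimpleGraph.incidenceSet, hE, and_comm]

lemma sum_card_swap (S : Finset V) (E : Finset (Sym2 V)) :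
    ∑ v ∈ S, (E.filter fun e => v ∈ e).card
      = ∑ e ∈ E, (S.filter fun v => v ∈ e).card := by
  simp only [Finset.card_filter]
  exact Finset.sum_comm

lemma fcard_of_mem {G : SimpleGraph V} {A : Finset (Sym2 V)} (hA : ∀ e ∈ A, e ∈ G.edgeSet)
    {e : Sym2 V} (he : e ∈ A) : ((vertSet A).filter fun v => v ∈ e).card = 2 := by
  induction e with
  | _ x y =>
    have hadj : G.Adj x y := (SimpleGraph.mem_edgeSet G).1 (hA _ he)
    have hxy : x ≠ y := hadj.ne
    have hx : x ∈ vertSet A := mem_vertSet_iff.2 ⟨s(x, y), he, by simp⟩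
    have hy : y ∈ vertSet A := mem_vertSet_iff.2 ⟨s(x, y), he, by simp⟩
    have hfilter : ((vertSet A).filter fun v => v ∈ (s(x, y) : Sym2 V)) = {x, y} := by
      ext v
      simp only [Finset.mem_filter, Sym2.mem_iff, Finset.mem_insert, Finset.mem_singleton]
      constructor
      · rintro ⟨-, h⟩; exact h
      · rintro (rfl | rfl)
        exacts [⟨hx, Or.inl rfl⟩, ⟨hy, Or.inr rfl⟩]
    rw [hfilter, Finset.card_insert_of_notMem (by simp [hxy]), Finset.card_singleton]

lemma fcard_le_two (A : Finset (Sym2 V)) (e : Sym2 V) :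
    ((vertSet A).filter fun v => v ∈ e).card ≤ 2 := by
  induction e with
  | _ x y =>
    have hsub : ((vertSet A).filter fun v => v ∈ (s(x, y) : Sym2 V)) ⊆ {x, y} := by
      intro v hv
      simp only [Finset.mem_filter, Sym2.mem_iff] at hv
      simpa using hv.2
    calc ((vertSet A).filter fun v => v ∈ (s(x, y) : Sym2 V)).card
        ≤ ({x, y} : Finset V).card := Finset.card_le_card hsub
      _ ≤ 2 := Finset.card_insert_le x {y}

lemma count_identity (G : SimpleGraph V) (d : ℕ) (hreg : ∀ v, deg G v = 2 * d)
    (A : Finset (Sym2 V)) (hA : ∀ e ∈ A, e ∈ G.edgeSet)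
    (E : Finset (Sym2 V)) (hE : E = Finset.univ.filter fun e => e ∈ G.edgeSet)
    (hAE : A ⊆ E) :
    2 * d * (vertSet A).card
      = 2 * A.card + ((deltaK G A 1).card + 2 * (deltaK G A 2).card) := by
  classical
  set f : Sym2 V → ℕ := fun e => ((vertSet A).filter fun v => v ∈ e).card with hf
  have h1 : ∑ v ∈ vertSet A, deg G v = 2 * d * (vertSet A).card := by
    simp [hreg, Finset.sum_const, mul_comm]
  have h2 : ∑ v ∈ vertSet A, deg G v = ∑ e ∈ E, f e := by
    rw [← sum_card_swap]
    exact Finset.sum_congr rfl fun v _ => deg_eq_card_incident G hE v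
  have h3 : ∑ e ∈ E, f e = ∑ e ∈ E \ A, f e + ∑ e ∈ A, f e :=
    (Finset.sum_sdiff hAE).symm
  have h4 : ∑ e ∈ A, f e = 2 * A.card := by
    rw [Finset.sum_congr rfl fun e he => fcard_of_mem hA he, Finset.sum_const]
    simp [mul_comm]
  have hdelta : ∀ k, (E \ A).filter (fun e => f e = k) = deltaK G A k := by
    intro k
    ext e
    simp only [Finset.mem_filter, Finset.mem_sdiff, deltaK, Finset.mem_univ, true_and, hE,
      hf, and_assoc]
  have h5 : ∑ e ∈ E \ A, f e
      = (deltaK G A 1).card + 2 * (deltaK G A 2).card := by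
    have hmaps : ∀ e ∈ E \ A, f e ∈ Finset.range 3 := by
      intro e _
      simp only [Finset.mem_range]
      exact Nat.lt_succ_of_le (fcard_le_two A e)
    rw [← Finset.sum_fiberwise_of_maps_to hmaps f]
    have hin : ∀ k, ∑ e ∈ (E \ A).filter (fun e => f e = k), f e = (deltaK G A k).card * k := by
      intro k
      rw [Finset.sum_congr rfl (fun e he => (Finset.mem_filter.1 he).2), Finset.sum_const,
        hdelta k, smul_eq_mul]
    rw [Finset.sum_range_succ, Finset.sum_range_succ, Finset.sum_range_succ,
      Finset.sum_range_zero, hin 0, hin 1, hin 2]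
    ring
  omega

end Helpers

/-- the random-cluster weight
`w(A) = p^{|A|}(1-p)^{|E∖A|} q^{c(A)}` (with `p = 1 - e^{-β}`) of a configuration
`A ⊆ E` on a finite `2d`-regular graph can be rewritten as
`w(A) = q^{c̃(A)} e^{-e_dis|V∖V(A)|} e^{-e_ord|V(A)|} e^{-κ‖δA‖}`, where
`e_dis = dβ - log q`, `e_ord = -d·log(1-e^{-β})`, `κ = ½·log(e^β - 1)`,
and `‖δA‖ = |δ₁A| + 2|δ₂A|`. -/
theorem stmt_9 {V : Type*} [Fintype V] [DecidableEq V] (G : SimpleGraph V) (d : ℕ)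
    (hreg : ∀ v, deg G v = 2 * d)
    (A : Finset (Sym2 V)) (hA : ∀ e ∈ A, e ∈ G.edgeSet)
    (E : Finset (Sym2 V)) (hE : E = Finset.univ.filter fun e => e ∈ G.edgeSet)
    (β q : ℝ) (hβ : 0 < β) (hq : 0 < q) (p : ℝ) (hp : p = 1 - Real.exp (-β)) :
    p ^ A.card * (1 - p) ^ (E.card - A.card) * q ^ compCount A
      = q ^ compCount' A *
        Real.exp (-(d * β - Real.log q) * (Finset.univ \ vertSet A).card) *
        Real.exp (-(-(d : ℝ) * Real.log (1 - Real.exp (-β))) * (vertSet A).card) *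
        Real.exp (-((1 : ℝ) / 2 * Real.log (Real.exp β - 1)) *
          ((deltaK G A 1).card + 2 * (deltaK G A 2).card : ℕ)) := by

  classical
  -- basic set facts
  have hAE : A ⊆ E := fun e he => by simp [hE, hA e he]
  have hcardAE : A.card ≤ E.card := Finset.card_le_card hAE
  set a := A.card with ha
  set m := (vertSet A).card with hm
  set n := (Finset.univ \ vertSet A).card with hn
  set k1 := (deltaK G A 1).card with hk1
  set k2 := (deltaK G A 2).card with hk2
  have hc : compCount A = compCount' A + n := compCount_eq A
  have hcount : 2 * d * m = 2 * a + (k1 + 2 * k2) :=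
    count_identity G d hreg A hA E hE hAE
  have hhs : 2 * E.card = 2 * d * Fintype.card V := by
    rw [edge_count G hE]
    simp [hreg, Finset.sum_const, mul_comm, mul_assoc, Finset.card_univ]
  have hV : Fintype.card V = n + m := by
    have h := Finset.card_sdiff_add_card_eq_card (Finset.subset_univ (vertSet A))
    rw [Finset.card_univ] at h
    omega
  -- real number facts
  have hexp : Real.exp (-β) < 1 := by
    have h := Real.exp_lt_exp.2 (show -β < 0 by linarith)
    simpa using h
  have hp0 : 0 < p := by rw [hp]; linarith
  have h1p : 1 - p = Real.exp (-β) := by rw [hp]; ring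
  have hlog : Real.log (Real.exp β - 1) = Real.log p + β := by
    have hpe : p * Real.exp β = Real.exp β - 1 := by
      rw [hp, sub_mul, one_mul, ← Real.exp_add]; simp
    rw [← hpe, Real.log_mul (ne_of_gt hp0) (ne_of_gt (Real.exp_pos β)), Real.log_exp]
  have e1 : p ^ a = Real.exp ((a : ℝ) * Real.log p) := by
    rw [Real.exp_nat_mul, Real.exp_log hp0]
  have e2 : (1 - p) ^ (E.card - a) = Real.exp (((E.card - a : ℕ) : ℝ) * (-β)) := by
    rw [h1p]
    exact (Real.exp_nat_mul _ _).symm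
  have e3 : q ^ n = Real.exp ((n : ℝ) * Real.log q) := by
    rw [Real.exp_nat_mul, Real.exp_log hq]
  have hcast : (((deltaK G A 1).card + 2 * (deltaK G A 2).card : ℕ) : ℝ)
      = (k1 : ℝ) + 2 * (k2 : ℝ) := by push_cast [hk1, hk2]; ring
  have hceq : (((E.card - a : ℕ)) : ℝ) = (E.card : ℝ) - (a : ℝ) := by
    rw [Nat.cast_sub hcardAE]
  rw [hc, pow_add, e1, e2, e3, hlog, ← hp, hcast, hceq]
  -- reduce to an identity of exponents
  have c1 : 2 * (d : ℝ) * (m : ℝ) = 2 * (a : ℝ) + ((k1 : ℝ) + 2 * (k2 : ℝ)) := by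
    exact_mod_cast hcount
  have c2 : 2 * (E.card : ℝ) = 2 * (d : ℝ) * ((n : ℝ) + (m : ℝ)) := by
    have : ((n : ℝ) + (m : ℝ)) = ((n + m : ℕ) : ℝ) := by push_cast; ring
    rw [this, ← hV]
    exact_mod_cast hhs
  have key : (a : ℝ) * Real.log p + ((E.card : ℝ) - (a : ℝ)) * (-β) + (n : ℝ) * Real.log q
      = -((d : ℝ) * β - Real.log q) * (n : ℝ) + -(-(d : ℝ) * Real.log p) * (m : ℝ)
        + -((1 : ℝ) / 2 * (Real.log p + β)) * ((k1 : ℝ) + 2 * (k2 : ℝ)) := by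
    linear_combination (-(Real.log p + β) / 2) * c1 + (-(β / 2)) * c2
  calc Real.exp ((a : ℝ) * Real.log p) * Real.exp (((E.card : ℝ) - (a : ℝ)) * (-β)) *
        (q ^ compCount' A * Real.exp ((n : ℝ) * Real.log q))
      = q ^ compCount' A * Real.exp ((a : ℝ) * Real.log p
          + ((E.card : ℝ) - (a : ℝ)) * (-β) + (n : ℝ) * Real.log q) := by
        rw [Real.exp_add, Real.exp_add]; ring
    _ = q ^ compCount' A * Real.exp (-((d : ℝ) * β - Real.log q) * (n : ℝ)
          + -(-(d : ℝ) * Real.log p) * (m : ℝ)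
          + -((1 : ℝ) / 2 * (Real.log p + β)) * ((k1 : ℝ) + 2 * (k2 : ℝ))) := by rw [key]
    _ = q ^ compCount' A * Real.exp (-((d : ℝ) * β - Real.log q) * (n : ℝ)) *
          Real.exp (-(-(d : ℝ) * Real.log p) * (m : ℝ)) *
          Real.exp (-((1 : ℝ) / 2 * (Real.log p + β)) * ((k1 : ℝ) + 2 * (k2 : ℝ))) := by
        rw [Real.exp_add, Real.exp_add]; ring
end

section
/- Let P be the transition matrix of the Swendsen-Wang chain for the q-state Potts model at inverse temperature β on a finite graph G=(V,E), and let G₀=(V,E₀) with E₀ ⊆ E and E₁ = E \ E₀. Then for all spin configurations σ, σ': P_G(σ,σ') ≥ e^{−β|E₁|}·P_{G₀}(σ,σ'), and hence P²_G(σ,σ') ≥ e^{−2β|E₁|}·P²_{G₀}(σ,σ'). Moreover the Gibbs measures satisfy e^{−β|E₁|}·μ_{G₀}(σ) ≤ μ_G(σ) ≤ e^{β|E₁|}·μ_{G₀}(σ), and consequently the inverse spectral gaps satisfy τ̃(P²_G) ≤ e^{5β|E₁|}·τ̃(P²_{G₀}). -/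
open Finset
open scoped Classical

variable {V : Type*} [Fintype V] [DecidableEq V]

/-- The monochromatic edges of the spin configuration `σ`. -/
noncomputable def monoEdges (G : SimpleGraph V) {q : ℕ} (σ : V → Fin q) :
    Finset (Sym2 V) :=
  Finset.univ.filter fun e : Sym2 V => e ∈ G.edgeSet ∧ ∀ x ∈ e, ∀ y ∈ e, σ x = σ y

/-- The Potts Hamiltonian: the number of non-monochromatic edges. -/
noncomputable def pottsH (G : SimpleGraph V) {q : ℕ} (σ : V → Fin q) : ℕ :=
  (Finset.univ.filter fun e : Sym2 V =>
    e ∈ G.edgeSet ∧ ¬ ∀ x ∈ e, ∀ y ∈ e, σ x = σ y).card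

/-- The Potts Gibbs measure `μ_G(σ) = e^{-βH_G(σ)}/Z_G`. -/
noncomputable def pottsMeasure (G : SimpleGraph V) (q : ℕ) (β : ℝ) (σ : V → Fin q) : ℝ :=
  Real.exp (-β * pottsH G σ) / ∑ σ' : V → Fin q, Real.exp (-β * pottsH G σ')

/-- The Swendsen–Wang transition kernel: delete each monochromatic edge independently with
probability `e^{-β}`, then recolor each connected component of the retained edge set
uniformly at random. -/
noncomputable def swKernel (G : SimpleGraph V) (q : ℕ) (β : ℝ) (σ σ' : V → Fin q) : ℝ :=
  ∑ A ∈ (monoEdges G σ).powerset,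
    (1 - Real.exp (-β)) ^ A.card * Real.exp (-β) ^ ((monoEdges G σ).card - A.card) *
      ∏ c : (SimpleGraph.fromEdgeSet (↑A : Set (Sym2 V))).ConnectedComponent,
        ((1 : ℝ) / q *
          ∑ k : Fin q, ∏ v ∈ Finset.univ.filter (fun v : V =>
              (SimpleGraph.fromEdgeSet (↑A : Set (Sym2 V))).connectedComponentMk v = c),
            (if σ' v = k then (1 : ℝ) else 0))

/-- The Swendsen–Wang transition matrix. -/
noncomputable def swMat (G : SimpleGraph V) (q : ℕ) (β : ℝ) :
    Matrix (V → Fin q) (V → Fin q) ℝ :=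
  Matrix.of fun σ σ' => swKernel G q β σ σ'

/-- The variance of `g` with respect to `μ`. -/
noncomputable def mcVar {Ω : Type*} [Fintype Ω] (μ g : Ω → ℝ) : ℝ :=
  (1 / 2) * ∑ s, ∑ t, (g s - g t) ^ 2 * (μ s * μ t)

/-- The Dirichlet form of `g` for the chain `P` with measure `μ`. -/
noncomputable def mcDir {Ω : Type*} [Fintype Ω] (μ : Ω → ℝ) (P : Matrix Ω Ω ℝ)
    (g : Ω → ℝ) : ℝ :=
  (1 / 2) * ∑ s, ∑ t, (g s - g t) ^ 2 * (μ s * P s t)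

/-- The inverse spectral gap `τ̃(P) = sup_{Var g > 0} Var(g)/E(g,g)`. -/
noncomputable def tauTilde {Ω : Type*} [Fintype Ω] (μ : Ω → ℝ) (P : Matrix Ω Ω ℝ) : ℝ :=
  ⨆ g : {g : Ω → ℝ // mcVar μ g ≠ 0}, mcVar μ g.1 / mcDir μ P g.1

section Auxiliary

/-- The summand of the Swendsen–Wang kernel, abstracted over the total number `m` of
monochromatic edges. -/
noncomputable def swTerm (q : ℕ) (β : ℝ) (σ' : V → Fin q) (m : ℕ) (A : Finset (Sym2 V)) : ℝ :=
  (1 - Real.exp (-β)) ^ A.card * Real.exp (-β) ^ (m - A.card) *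
    ∏ c : (SimpleGraph.fromEdgeSet (↑A : Set (Sym2 V))).ConnectedComponent,
      ((1 : ℝ) / q *
        ∑ k : Fin q, ∏ v ∈ Finset.univ.filter (fun v : V =>
            (SimpleGraph.fromEdgeSet (↑A : Set (Sym2 V))).connectedComponentMk v = c),
          (if σ' v = k then (1 : ℝ) else 0))

lemma swKernel_eq (G : SimpleGraph V) (q : ℕ) (β : ℝ) (σ σ' : V → Fin q) :
    swKernel G q β σ σ' = ∑ A ∈ (monoEdges G σ).powerset, swTerm q β σ' (monoEdges G σ).card A := rfl
lemma prodFactor_nonneg {q : ℕ} (σ' : V → Fin q) (H : SimpleGraph V) :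
    0 ≤ ∏ c : H.ConnectedComponent,
      ((1 : ℝ) / q * ∑ k : Fin q, ∏ v ∈ Finset.univ.filter (fun v : V =>
          H.connectedComponentMk v = c), (if σ' v = k then (1 : ℝ) else 0)) := by
  apply Finset.prod_nonneg
  intro c _
  apply mul_nonneg (by positivity)
  apply Finset.sum_nonneg
  intro k _
  apply Finset.prod_nonneg
  intro v _
  split <;> norm_num

lemma prodFactor_pos {q : ℕ} (hq : 1 ≤ q) (σ' : V → Fin q) (H : SimpleGraph V) (hH : H = ⊥) :
    0 < ∏ c : H.ConnectedComponent,
      ((1 : ℝ) / q * ∑ k : Fin q, ∏ v ∈ Finset.univ.filter (fun v : V =>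
          H.connectedComponentMk v = c), (if σ' v = k then (1 : ℝ) else 0)) := by
  subst hH
  apply Finset.prod_pos
  intro c _
  obtain ⟨v₀, rfl⟩ := c.exists_rep
  have hfilt : Finset.univ.filter (fun v : V =>
      (⊥ : SimpleGraph V).connectedComponentMk v = Quot.mk (⊥ : SimpleGraph V).Reachable v₀)
      = {v₀} := by
    ext v
    simp only [Finset.mem_filter, Finset.mem_univ, true_and, Finset.mem_singleton]
    change Quot.mk _ v = Quot.mk _ v₀ ↔ _
    rw [show (Quot.mk (⊥ : SimpleGraph V).Reachable v = Quot.mk (⊥ : SimpleGraph V).Reachable v₀) ↔ ((⊥ : SimpleGraph V).connectedComponentMk v = (⊥ : SimpleGraph V).connectedComponentMk v₀) from Iff.rfl, SimpleGraph.ConnectedComponent.eq, SimpleGraph.reachable_bot]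
  rw [hfilt]
  have : (∑ k : Fin q, ∏ v ∈ ({v₀} : Finset V), (if σ' v = k then (1 : ℝ) else 0)) = 1 := by
    simp
  rw [this]
  have hq0 : (0 : ℝ) < q := by exact_mod_cast hq
  positivity

lemma swTerm_nonneg {q : ℕ} (β : ℝ) (hβ : 0 < β) (σ' : V → Fin q) (m : ℕ) (A : Finset (Sym2 V)) :
    0 ≤ swTerm q β σ' m A := by
  unfold swTerm
  have h1 : Real.exp (-β) ≤ 1 := by
    rw [show (1:ℝ) = Real.exp 0 by simp]
    exact Real.exp_le_exp.mpr (by linarith)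
  apply mul_nonneg (mul_nonneg (pow_nonneg (by linarith) _) (by positivity))
  apply Finset.prod_nonneg
  intro c _
  apply mul_nonneg (by positivity)
  apply Finset.sum_nonneg
  intro k _
  apply Finset.prod_nonneg
  intro v _
  split <;> norm_num

lemma swKernel_nonneg (G : SimpleGraph V) (q : ℕ) {β : ℝ} (hβ : 0 < β) (σ σ' : V → Fin q) :
    0 ≤ swKernel G q β σ σ' := by
  rw [swKernel_eq]
  exact Finset.sum_nonneg fun A _ => swTerm_nonneg β hβ σ' _ A

lemma swKernel_pos (G : SimpleGraph V) {q : ℕ} (hq : 1 ≤ q) {β : ℝ} (hβ : 0 < β)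
    (σ σ' : V → Fin q) : 0 < swKernel G q β σ σ' := by
  rw [swKernel_eq]
  have hmem : ∅ ∈ (monoEdges G σ).powerset := Finset.empty_mem_powerset _
  have hterm : 0 < swTerm q β σ' (monoEdges G σ).card ∅ := by
    unfold swTerm
    have hbot : SimpleGraph.fromEdgeSet (↑(∅ : Finset (Sym2 V)) : Set (Sym2 V)) = ⊥ := by
      simp
    have := prodFactor_pos hq σ' _ hbot
    simp only [Finset.card_empty, pow_zero, one_mul]
    exact mul_pos (pow_pos (Real.exp_pos _) _) (by convert this using 3; rfl)
  calc (0:ℝ) < swTerm q β σ' (monoEdges G σ).card ∅ := hterm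
    _ ≤ _ := Finset.single_le_sum (fun A _ => swTerm_nonneg β hβ σ' _ A) hmem
lemma swTerm_compare {q : ℕ} {β : ℝ} (hβ : 0 < β) (σ' : V → Fin q) {m₀ m e : ℕ}
    (hm : m₀ ≤ m) (hk : m - m₀ ≤ e) {A : Finset (Sym2 V)} (hA : A.card ≤ m₀) :
    Real.exp (-β * e) * swTerm q β σ' m₀ A ≤ swTerm q β σ' m A := by
  have hexp1 : Real.exp (-β) ≤ 1 := by
    rw [show (1:ℝ) = Real.exp 0 by simp]
    exact Real.exp_le_exp.mpr (by linarith)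
  have hsplit : m - A.card = (m - m₀) + (m₀ - A.card) :=
    (tsub_add_tsub_cancel hm hA).symm
  have h1 : Real.exp (-β * e) ≤ Real.exp (-β) ^ (m - m₀) := by
    rw [← Real.exp_nat_mul]
    apply Real.exp_le_exp.mpr
    have hc : ((m - m₀ : ℕ) : ℝ) ≤ (e : ℕ) := Nat.cast_le.mpr hk
    nlinarith
  have hnn : 0 ≤ (1 - Real.exp (-β)) ^ A.card * Real.exp (-β) ^ (m₀ - A.card) *
      ∏ c : (SimpleGraph.fromEdgeSet (↑A : Set (Sym2 V))).ConnectedComponent,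
        ((1 : ℝ) / q *
          ∑ k : Fin q, ∏ v ∈ Finset.univ.filter (fun v : V =>
              (SimpleGraph.fromEdgeSet (↑A : Set (Sym2 V))).connectedComponentMk v = c),
            (if σ' v = k then (1 : ℝ) else 0)) :=
    swTerm_nonneg β hβ σ' m₀ A
  unfold swTerm at hnn ⊢
  rw [hsplit, pow_add]
  calc Real.exp (-β * e) * ((1 - Real.exp (-β)) ^ A.card * Real.exp (-β) ^ (m₀ - A.card) * _)
      ≤ Real.exp (-β) ^ (m - m₀) * ((1 - Real.exp (-β)) ^ A.card * Real.exp (-β) ^ (m₀ - A.card) * _) :=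
        mul_le_mul_of_nonneg_right h1 hnn
    _ = _ := by ring

lemma swKernel_compare {q : ℕ} {β : ℝ} (hβ : 0 < β) {G G₀ : SimpleGraph V}
    (σ σ' : V → Fin q) (hMsub : monoEdges G₀ σ ⊆ monoEdges G σ) {e : ℕ}
    (he : (monoEdges G σ).card - (monoEdges G₀ σ).card ≤ e) :
    Real.exp (-β * e) * swKernel G₀ q β σ σ' ≤ swKernel G q β σ σ' := by
  rw [swKernel_eq, swKernel_eq, Finset.mul_sum]
  calc ∑ A ∈ (monoEdges G₀ σ).powerset, Real.exp (-β * e) * swTerm q β σ' (monoEdges G₀ σ).card A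
      ≤ ∑ A ∈ (monoEdges G₀ σ).powerset, swTerm q β σ' (monoEdges G σ).card A := by
        apply Finset.sum_le_sum
        intro A hA
        exact swTerm_compare hβ σ' (Finset.card_le_card hMsub) he
          (Finset.card_le_card (Finset.mem_powerset.mp hA))
    _ ≤ _ := Finset.sum_le_sum_of_subset_of_nonneg (Finset.powerset_mono.mpr hMsub)
        (fun A _ _ => swTerm_nonneg β hβ σ' _ A)
lemma pottsH_mono {G G₀ : SimpleGraph V} (hsub : G₀ ≤ G) {q : ℕ} (σ : V → Fin q) :
    pottsH G₀ σ ≤ pottsH G σ := by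
  apply Finset.card_le_card
  intro x hx
  simp only [Finset.mem_filter, Finset.mem_univ, true_and] at hx ⊢
  exact ⟨SimpleGraph.edgeSet_mono hsub hx.1, hx.2⟩

lemma pottsH_le {G G₀ : SimpleGraph V} (hsub : G₀ ≤ G) {E₁ : Finset (Sym2 V)}
    (hE₁ : E₁ = Finset.univ.filter fun e : Sym2 V => e ∈ G.edgeSet ∧ e ∉ G₀.edgeSet)
    {q : ℕ} (σ : V → Fin q) : pottsH G σ ≤ pottsH G₀ σ + E₁.card := by
  have hss : (Finset.univ.filter fun e : Sym2 V =>
      e ∈ G.edgeSet ∧ ¬ ∀ x ∈ e, ∀ y ∈ e, σ x = σ y) ⊆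
      (Finset.univ.filter fun e : Sym2 V =>
        e ∈ G₀.edgeSet ∧ ¬ ∀ x ∈ e, ∀ y ∈ e, σ x = σ y) ∪ E₁ := by
    intro x hx
    simp only [Finset.mem_filter, Finset.mem_univ, true_and] at hx
    by_cases h : x ∈ G₀.edgeSet
    · exact Finset.mem_union_left _ (Finset.mem_filter.mpr ⟨Finset.mem_univ _, h, hx.2⟩)
    · apply Finset.mem_union_right
      rw [hE₁]
      exact Finset.mem_filter.mpr ⟨Finset.mem_univ _, hx.1, h⟩
  calc pottsH G σ ≤ _ := Finset.card_le_card hss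
    _ ≤ _ + E₁.card := Finset.card_union_le _ _

lemma exp_H_le {β : ℝ} (hβ : 0 < β) {m n : ℕ} (h : m ≤ n) :
    Real.exp (-β * n) ≤ Real.exp (-β * m) := by
  apply Real.exp_le_exp.mpr
  have : (m : ℝ) ≤ n := Nat.cast_le.mpr h
  nlinarith

lemma potts_compare {G G₀ : SimpleGraph V} (hsub : G₀ ≤ G) {q : ℕ} (hq : 1 ≤ q)
    {β : ℝ} (hβ : 0 < β) {E₁ : Finset (Sym2 V)}
    (hE₁ : E₁ = Finset.univ.filter fun e : Sym2 V => e ∈ G.edgeSet ∧ e ∉ G₀.edgeSet)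
    (σ : V → Fin q) :
    Real.exp (-β * E₁.card) * pottsMeasure G₀ q β σ ≤ pottsMeasure G q β σ ∧
    pottsMeasure G q β σ ≤ Real.exp (β * E₁.card) * pottsMeasure G₀ q β σ := by
  haveI : Nonempty (Fin q) := Fin.pos_iff_nonempty.mp hq
  have hZG : 0 < ∑ σ' : V → Fin q, Real.exp (-β * pottsH G σ') :=
    Finset.sum_pos (fun _ _ => Real.exp_pos _) Finset.univ_nonempty
  have hZ0 : 0 < ∑ σ' : V → Fin q, Real.exp (-β * pottsH G₀ σ') :=
    Finset.sum_pos (fun _ _ => Real.exp_pos _) Finset.univ_nonempty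
  have hZle : ∑ σ' : V → Fin q, Real.exp (-β * pottsH G σ')
      ≤ ∑ σ' : V → Fin q, Real.exp (-β * pottsH G₀ σ') :=
    Finset.sum_le_sum fun σ' _ => exp_H_le hβ (pottsH_mono hsub σ')
  have hZge : Real.exp (-β * E₁.card) * ∑ σ' : V → Fin q, Real.exp (-β * pottsH G₀ σ')
      ≤ ∑ σ' : V → Fin q, Real.exp (-β * pottsH G σ') := by
    rw [Finset.mul_sum]
    apply Finset.sum_le_sum
    intro σ' _
    rw [← Real.exp_add]
    calc Real.exp (-β * E₁.card + -β * pottsH G₀ σ')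
        = Real.exp (-β * ((pottsH G₀ σ' + E₁.card : ℕ) : ℝ)) := by
          congr 1; push_cast; ring
      _ ≤ Real.exp (-β * pottsH G σ') := exp_H_le hβ (pottsH_le hsub hE₁ σ')
  have hnum_le : Real.exp (-β * pottsH G σ) ≤ Real.exp (-β * pottsH G₀ σ) :=
    exp_H_le hβ (pottsH_mono hsub σ)
  have hnum_ge : Real.exp (-β * E₁.card) * Real.exp (-β * pottsH G₀ σ)
      ≤ Real.exp (-β * pottsH G σ) := by
    rw [← Real.exp_add]
    calc Real.exp (-β * E₁.card + -β * pottsH G₀ σ)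
        = Real.exp (-β * ((pottsH G₀ σ + E₁.card : ℕ) : ℝ)) := by
          congr 1; push_cast; ring
      _ ≤ _ := exp_H_le hβ (pottsH_le hsub hE₁ σ)
  unfold pottsMeasure
  constructor
  · rw [mul_div_assoc', div_le_div_iff₀ hZ0 hZG]
    calc (Real.exp (-β * E₁.card) * Real.exp (-β * pottsH G₀ σ)) *
          (∑ σ' : V → Fin q, Real.exp (-β * pottsH G σ'))
        ≤ Real.exp (-β * pottsH G σ) * (∑ σ' : V → Fin q, Real.exp (-β * pottsH G₀ σ')) :=
          mul_le_mul hnum_ge hZle hZG.le (Real.exp_nonneg _)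
      _ = _ := rfl
  · rw [mul_div_assoc', div_le_div_iff₀ hZG hZ0]
    have hee : Real.exp (β * E₁.card) * Real.exp (-β * E₁.card) = 1 := by
      rw [← Real.exp_add]; simp
    have hD : (∑ σ' : V → Fin q, Real.exp (-β * pottsH G₀ σ'))
        ≤ Real.exp (β * E₁.card) * ∑ σ' : V → Fin q, Real.exp (-β * pottsH G σ') := by
      nlinarith [Real.exp_pos (β * (E₁.card : ℝ)), hZge]
    calc Real.exp (-β * pottsH G σ) * (∑ σ' : V → Fin q, Real.exp (-β * pottsH G₀ σ'))
        ≤ Real.exp (-β * pottsH G₀ σ) *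
            (Real.exp (β * E₁.card) * ∑ σ' : V → Fin q, Real.exp (-β * pottsH G σ')) :=
          mul_le_mul hnum_le hD hZ0.le (Real.exp_nonneg _)
      _ = _ := by ring

lemma pottsMeasure_pos (G : SimpleGraph V) {q : ℕ} (hq : 1 ≤ q) (β : ℝ) (σ : V → Fin q) :
    0 < pottsMeasure G q β σ := by
  haveI : Nonempty (Fin q) := Fin.pos_iff_nonempty.mp hq
  exact div_pos (Real.exp_pos _) (Finset.sum_pos (fun _ _ => Real.exp_pos _) Finset.univ_nonempty)

section MC
variable {Ω : Type*} [Fintype Ω]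
lemma mcVar_nonneg {μ : Ω → ℝ} (hμ : ∀ s, 0 ≤ μ s) (g : Ω → ℝ) : 0 ≤ mcVar μ g := by
  unfold mcVar
  apply mul_nonneg (by norm_num)
  exact Finset.sum_nonneg fun s _ => Finset.sum_nonneg fun t _ =>
    mul_nonneg (sq_nonneg _) (mul_nonneg (hμ s) (hμ t))

lemma mcDir_nonneg {μ : Ω → ℝ} {P : Matrix Ω Ω ℝ} (hμ : ∀ s, 0 ≤ μ s)
    (hP : ∀ s t, 0 ≤ P s t) (g : Ω → ℝ) : 0 ≤ mcDir μ P g := by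
  unfold mcDir
  apply mul_nonneg (by norm_num)
  exact Finset.sum_nonneg fun s _ => Finset.sum_nonneg fun t _ =>
    mul_nonneg (sq_nonneg _) (mul_nonneg (hμ s) (hP s t))

lemma mcVar_le {μ ν : Ω → ℝ} {e : ℝ} (he : 0 ≤ e) (hν : ∀ s, 0 ≤ ν s)
    (hμ : ∀ s, 0 ≤ μ s) (hμν : ∀ s, μ s ≤ e * ν s) (g : Ω → ℝ) :
    mcVar μ g ≤ (e * e) * mcVar ν g := by
  unfold mcVar
  have key : ∀ s t : Ω, (g s - g t) ^ 2 * (μ s * μ t)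
      ≤ (g s - g t) ^ 2 * ((e * ν s) * (e * ν t)) := fun s t =>
    mul_le_mul_of_nonneg_left
      (mul_le_mul (hμν s) (hμν t) (hμ t) (mul_nonneg he (hν s))) (sq_nonneg _)
  calc (1/2) * ∑ s, ∑ t, (g s - g t) ^ 2 * (μ s * μ t)
      ≤ (1/2) * ∑ s, ∑ t, (g s - g t) ^ 2 * ((e * ν s) * (e * ν t)) := by
        apply mul_le_mul_of_nonneg_left _ (by norm_num)
        exact Finset.sum_le_sum fun s _ => Finset.sum_le_sum fun t _ => key s t
    _ = (e * e) * ((1/2) * ∑ s, ∑ t, (g s - g t) ^ 2 * (ν s * ν t)) := by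
        have : ∀ s t : Ω, (g s - g t) ^ 2 * ((e * ν s) * (e * ν t))
            = (e * e) * ((g s - g t) ^ 2 * (ν s * ν t)) := fun s t => by ring
        simp_rw [this, ← Finset.mul_sum]
        ring

lemma mcDir_compare {μ ν : Ω → ℝ} {P Q : Matrix Ω Ω ℝ} {d₁ d₂ : ℝ}
    (hd₂ : 0 ≤ d₂) (hν : ∀ s, 0 ≤ ν s) (hμ : ∀ s, 0 ≤ μ s)
    (hQ : ∀ s t, 0 ≤ Q s t)
    (h1 : ∀ s, d₁ * ν s ≤ μ s) (h2 : ∀ s t, d₂ * Q s t ≤ P s t) (g : Ω → ℝ) :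
    (d₁ * d₂) * mcDir ν Q g ≤ mcDir μ P g := by
  unfold mcDir
  have key : ∀ s t : Ω, (g s - g t) ^ 2 * ((d₁ * ν s) * (d₂ * Q s t))
      ≤ (g s - g t) ^ 2 * (μ s * P s t) := fun s t =>
    mul_le_mul_of_nonneg_left
      (mul_le_mul (h1 s) (h2 s t) (mul_nonneg hd₂ (hQ s t)) (hμ s)) (sq_nonneg _)
  calc (d₁ * d₂) * ((1/2) * ∑ s, ∑ t, (g s - g t) ^ 2 * (ν s * Q s t))
      = (1/2) * ∑ s, ∑ t, (g s - g t) ^ 2 * ((d₁ * ν s) * (d₂ * Q s t)) := by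
        have : ∀ s t : Ω, (g s - g t) ^ 2 * ((d₁ * ν s) * (d₂ * Q s t))
            = (d₁ * d₂) * ((g s - g t) ^ 2 * (ν s * Q s t)) := fun s t => by ring
        simp_rw [this, ← Finset.mul_sum]
        ring
    _ ≤ _ := by
        apply mul_le_mul_of_nonneg_left _ (by norm_num)
        exact Finset.sum_le_sum fun s _ => Finset.sum_le_sum fun t _ => key s t

lemma dir_ge_var [Nonempty Ω] {μ : Ω → ℝ} {P : Matrix Ω Ω ℝ}
    (hμ : ∀ s, 0 < μ s) (hP : ∀ s t, 0 < P s t) :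
    ∃ ε : ℝ, 0 < ε ∧ ∀ g : Ω → ℝ, ε * mcVar μ g ≤ mcDir μ P g := by
  have hne : (Finset.univ : Finset (Ω × Ω)).Nonempty := Finset.univ_nonempty
  refine ⟨Finset.univ.inf' hne (fun p : Ω × Ω => P p.1 p.2 / μ p.2), ?_, ?_⟩
  · rw [Finset.lt_inf'_iff]
    exact fun p _ => div_pos (hP p.1 p.2) (hμ p.2)
  · intro g
    set ε := Finset.univ.inf' hne (fun p : Ω × Ω => P p.1 p.2 / μ p.2) with hε
    have hkey : ∀ s t : Ω, ε * μ t ≤ P s t := by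
      intro s t
      have h1 : ε ≤ P s t / μ t := Finset.inf'_le _ (Finset.mem_univ (s, t))
      exact (le_div_iff₀ (hμ t)).mp h1
    unfold mcVar mcDir
    have key : ∀ s t : Ω, ε * ((g s - g t) ^ 2 * (μ s * μ t))
        ≤ (g s - g t) ^ 2 * (μ s * P s t) := by
      intro s t
      have : (g s - g t) ^ 2 * (μ s * (ε * μ t)) ≤ (g s - g t) ^ 2 * (μ s * P s t) :=
        mul_le_mul_of_nonneg_left
          (mul_le_mul_of_nonneg_left (hkey s t) (hμ s).le) (sq_nonneg _)
      calc ε * ((g s - g t) ^ 2 * (μ s * μ t))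
          = (g s - g t) ^ 2 * (μ s * (ε * μ t)) := by ring
        _ ≤ _ := this
    calc ε * ((1/2) * ∑ s, ∑ t, (g s - g t) ^ 2 * (μ s * μ t))
        = (1/2) * ∑ s, ∑ t, ε * ((g s - g t) ^ 2 * (μ s * μ t)) := by
          simp_rw [← Finset.mul_sum]; ring
      _ ≤ _ := by
          apply mul_le_mul_of_nonneg_left _ (by norm_num)
          exact Finset.sum_le_sum fun s _ => Finset.sum_le_sum fun t _ => key s t

lemma mcDir_pos [Nonempty Ω] {μ : Ω → ℝ} {P : Matrix Ω Ω ℝ}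
    (hμ : ∀ s, 0 < μ s) (hP : ∀ s t, 0 < P s t) {g : Ω → ℝ} (hg : mcVar μ g ≠ 0) :
    0 < mcDir μ P g := by
  obtain ⟨ε, hε, hkey⟩ := dir_ge_var hμ hP
  have hv : 0 < mcVar μ g := (mcVar_nonneg (fun s => (hμ s).le) g).lt_of_ne (Ne.symm hg)
  exact lt_of_lt_of_le (mul_pos hε hv) (hkey g)

lemma le_tauTilde [Nonempty Ω] {μ : Ω → ℝ} {P : Matrix Ω Ω ℝ}
    (hμ : ∀ s, 0 < μ s) (hP : ∀ s t, 0 < P s t) {g : Ω → ℝ} (hg : mcVar μ g ≠ 0) :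
    mcVar μ g / mcDir μ P g ≤ tauTilde μ P := by
  obtain ⟨ε, hε, hkey⟩ := dir_ge_var hμ hP
  have hbdd : BddAbove (Set.range fun g' : {g' : Ω → ℝ // mcVar μ g' ≠ 0} =>
      mcVar μ g'.1 / mcDir μ P g'.1) := by
    refine ⟨ε⁻¹, ?_⟩
    rintro x ⟨g', rfl⟩
    have hv : 0 < mcVar μ g'.1 :=
      (mcVar_nonneg (fun s => (hμ s).le) g'.1).lt_of_ne (Ne.symm g'.2)
    have hd : 0 < mcDir μ P g'.1 := lt_of_lt_of_le (mul_pos hε hv) (hkey g'.1)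
    rw [div_le_iff₀ hd]
    have h2 := mul_le_mul_of_nonneg_left (hkey g'.1) (inv_nonneg.mpr hε.le)
    have h3 : ε⁻¹ * (ε * mcVar μ g'.1) = mcVar μ g'.1 := by
      field_simp
    linarith
  exact le_ciSup hbdd (⟨g, hg⟩ : {g' : Ω → ℝ // mcVar μ g' ≠ 0})

lemma tauTilde_nonneg {μ : Ω → ℝ} {P : Matrix Ω Ω ℝ} (hμ : ∀ s, 0 ≤ μ s)
    (hP : ∀ s t, 0 ≤ P s t) : 0 ≤ tauTilde μ P :=
  Real.iSup_nonneg fun g => div_nonneg (mcVar_nonneg hμ g.1) (mcDir_nonneg hμ hP g.1)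

end MC

end Auxiliary

/-- comparison of the Swendsen–Wang chain on `G` and on a spanning subgraph
`G₀`, with `E₁ = E \ E₀`: pointwise kernel bounds, two-step bounds, Gibbs measure
comparison, and the resulting inverse-gap bound `τ̃(P²_G) ≤ e^{5β|E₁|}·τ̃(P²_{G₀})`. -/
theorem stmt_10 {V : Type*} [Fintype V] [DecidableEq V] [Nonempty V]
    (G G₀ : SimpleGraph V) (hsub : G₀ ≤ G) (q : ℕ) (hq : 1 ≤ q) (β : ℝ) (hβ : 0 < β)
    (E₁ : Finset (Sym2 V))
    (hE₁ : E₁ = Finset.univ.filter fun e : Sym2 V => e ∈ G.edgeSet ∧ e ∉ G₀.edgeSet) :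
    (∀ σ σ' : V → Fin q,
      Real.exp (-β * E₁.card) * swKernel G₀ q β σ σ' ≤ swKernel G q β σ σ') ∧
    (∀ σ σ' : V → Fin q,
      Real.exp (-2 * β * E₁.card) * (swMat G₀ q β * swMat G₀ q β) σ σ'
        ≤ (swMat G q β * swMat G q β) σ σ') ∧
    (∀ σ : V → Fin q,
      Real.exp (-β * E₁.card) * pottsMeasure G₀ q β σ ≤ pottsMeasure G q β σ ∧
      pottsMeasure G q β σ ≤ Real.exp (β * E₁.card) * pottsMeasure G₀ q β σ) ∧
    tauTilde (pottsMeasure G q β) (swMat G q β * swMat G q β)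
      ≤ Real.exp (5 * β * E₁.card) *
          tauTilde (pottsMeasure G₀ q β) (swMat G₀ q β * swMat G₀ q β) := by
  haveI : Nonempty (Fin q) := Fin.pos_iff_nonempty.mp hq
  -- monochromatic edges comparison
  have hMsub : ∀ σ : V → Fin q, monoEdges G₀ σ ⊆ monoEdges G σ := by
    intro σ e he
    simp only [monoEdges, Finset.mem_filter, Finset.mem_univ, true_and] at he ⊢
    exact ⟨SimpleGraph.edgeSet_mono hsub he.1, he.2⟩
  have hcard : ∀ σ : V → Fin q,
      (monoEdges G σ).card - (monoEdges G₀ σ).card ≤ E₁.card := by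
    intro σ
    rw [← Finset.card_sdiff_of_subset (hMsub σ)]
    apply Finset.card_le_card
    intro e he'
    rw [Finset.mem_sdiff] at he'
    rw [hE₁]
    simp only [monoEdges, Finset.mem_filter, Finset.mem_univ, true_and] at he' ⊢
    exact ⟨he'.1.1, fun h0 => he'.2 ⟨h0, he'.1.2⟩⟩
  -- part 1
  have part1 : ∀ σ σ' : V → Fin q,
      Real.exp (-β * E₁.card) * swKernel G₀ q β σ σ' ≤ swKernel G q β σ σ' :=
    fun σ σ' => swKernel_compare hβ σ σ' (hMsub σ) (hcard σ)
  -- expansion of the matrix square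
  have expand : ∀ (H : SimpleGraph V) (σ σ' : V → Fin q),
      (swMat H q β * swMat H q β) σ σ'
        = ∑ τ : V → Fin q, swKernel H q β σ τ * swKernel H q β τ σ' := by
    intro H σ σ'
    rw [Matrix.mul_apply]
    rfl
  -- part 2
  have part2 : ∀ σ σ' : V → Fin q,
      Real.exp (-2 * β * E₁.card) * (swMat G₀ q β * swMat G₀ q β) σ σ'
        ≤ (swMat G q β * swMat G q β) σ σ' := by
    intro σ σ'
    rw [expand, expand, Finset.mul_sum]
    apply Finset.sum_le_sum
    intro τ _
    have hee : Real.exp (-2 * β * E₁.card)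
        = Real.exp (-β * E₁.card) * Real.exp (-β * E₁.card) := by
      rw [← Real.exp_add]; congr 1; ring
    calc Real.exp (-2 * β * E₁.card) * (swKernel G₀ q β σ τ * swKernel G₀ q β τ σ')
        = (Real.exp (-β * E₁.card) * swKernel G₀ q β σ τ) *
            (Real.exp (-β * E₁.card) * swKernel G₀ q β τ σ') := by rw [hee]; ring
      _ ≤ swKernel G q β σ τ * swKernel G q β τ σ' :=
          mul_le_mul (part1 σ τ) (part1 τ σ')
            (mul_nonneg (Real.exp_nonneg _) (swKernel_nonneg G₀ q hβ τ σ'))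
            (swKernel_nonneg G q hβ σ τ)
  -- part 3
  have part3 : ∀ σ : V → Fin q,
      Real.exp (-β * E₁.card) * pottsMeasure G₀ q β σ ≤ pottsMeasure G q β σ ∧
      pottsMeasure G q β σ ≤ Real.exp (β * E₁.card) * pottsMeasure G₀ q β σ :=
    fun σ => potts_compare hsub hq hβ hE₁ σ
  refine ⟨part1, part2, part3, ?_⟩
  -- part 4
  have hμG : ∀ s : V → Fin q, 0 < pottsMeasure G q β s := fun s => pottsMeasure_pos G hq β s
  have hμ0 : ∀ s : V → Fin q, 0 < pottsMeasure G₀ q β s := fun s => pottsMeasure_pos G₀ hq β s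
  have hP02pos : ∀ s t : V → Fin q, 0 < (swMat G₀ q β * swMat G₀ q β) s t := by
    intro s t
    rw [expand]
    exact Finset.sum_pos
      (fun τ _ => mul_pos (swKernel_pos G₀ hq hβ s τ) (swKernel_pos G₀ hq hβ τ t))
      Finset.univ_nonempty
  have hPG2nonneg : ∀ s t : V → Fin q, 0 ≤ (swMat G q β * swMat G q β) s t := by
    intro s t
    rw [expand]
    exact Finset.sum_nonneg fun τ _ =>
      mul_nonneg (swKernel_nonneg G q hβ s τ) (swKernel_nonneg G q hβ τ t)
  have hVarle : ∀ g : (V → Fin q) → ℝ,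
      mcVar (pottsMeasure G q β) g
        ≤ (Real.exp (β * E₁.card) * Real.exp (β * E₁.card)) * mcVar (pottsMeasure G₀ q β) g :=
    fun g => mcVar_le (Real.exp_nonneg _) (fun s => (hμ0 s).le) (fun s => (hμG s).le)
      (fun s => (part3 s).2) g
  have hDirge : ∀ g : (V → Fin q) → ℝ,
      (Real.exp (-β * E₁.card) * Real.exp (-2 * β * E₁.card)) *
          mcDir (pottsMeasure G₀ q β) (swMat G₀ q β * swMat G₀ q β) g
        ≤ mcDir (pottsMeasure G q β) (swMat G q β * swMat G q β) g :=
    fun g => mcDir_compare (Real.exp_nonneg _) (fun s => (hμ0 s).le) (fun s => (hμG s).le)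
      (fun s t => (hP02pos s t).le) (fun s => (part3 s).1) part2 g
  have htau0 : 0 ≤ tauTilde (pottsMeasure G₀ q β) (swMat G₀ q β * swMat G₀ q β) :=
    tauTilde_nonneg (fun s => (hμ0 s).le) (fun s t => (hP02pos s t).le)
  refine Real.iSup_le (fun g => ?_) (mul_nonneg (Real.exp_nonneg _) htau0)
  obtain ⟨g, hg⟩ := g
  have hVG : 0 < mcVar (pottsMeasure G q β) g :=
    (mcVar_nonneg (fun s => (hμG s).le) g).lt_of_ne (Ne.symm hg)
  have hV0 : 0 < mcVar (pottsMeasure G₀ q β) g := by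
    by_contra h
    push_neg at h
    have h2 : (Real.exp (β * E₁.card) * Real.exp (β * E₁.card)) *
        mcVar (pottsMeasure G₀ q β) g ≤ 0 :=
      mul_nonpos_iff.mpr (Or.inl ⟨by positivity, h⟩)
    linarith [hVarle g]
  have hD0 : 0 < mcDir (pottsMeasure G₀ q β) (swMat G₀ q β * swMat G₀ q β) g :=
    mcDir_pos hμ0 hP02pos hV0.ne'
  have hDG : 0 < mcDir (pottsMeasure G q β) (swMat G q β * swMat G q β) g :=
    lt_of_lt_of_le (mul_pos (mul_pos (Real.exp_pos _) (Real.exp_pos _)) hD0) (hDirge g)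
  have hE23 : (Real.exp (β * E₁.card) * Real.exp (β * E₁.card)) /
      (Real.exp (-β * E₁.card) * Real.exp (-2 * β * E₁.card)) = Real.exp (5 * β * E₁.card) := by
    rw [← Real.exp_add, ← Real.exp_add, ← Real.exp_sub]
    congr 1
    ring
  calc mcVar (pottsMeasure G q β) g
        / mcDir (pottsMeasure G q β) (swMat G q β * swMat G q β) g
      ≤ ((Real.exp (β * E₁.card) * Real.exp (β * E₁.card)) *
            mcVar (pottsMeasure G₀ q β) g) /
          ((Real.exp (-β * E₁.card) * Real.exp (-2 * β * E₁.card)) *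
            mcDir (pottsMeasure G₀ q β) (swMat G₀ q β * swMat G₀ q β) g) :=
        div_le_div₀ (mul_nonneg (by positivity) hV0.le) (hVarle g)
          (mul_pos (mul_pos (Real.exp_pos _) (Real.exp_pos _)) hD0) (hDirge g)
    _ = Real.exp (5 * β * E₁.card) *
          (mcVar (pottsMeasure G₀ q β) g /
            mcDir (pottsMeasure G₀ q β) (swMat G₀ q β * swMat G₀ q β) g) := by
        rw [mul_div_mul_comm, hE23]
    _ ≤ Real.exp (5 * β * E₁.card) *
          tauTilde (pottsMeasure G₀ q β) (swMat G₀ q β * swMat G₀ q β) :=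
        mul_le_mul_of_nonneg_left (le_tauTilde hμ0 hP02pos hV0.ne') (Real.exp_nonneg _)
end

section
/- In the d-dimensional half-integer torus, if X* is an orientable closed surface (a set of (d−1)-cells with empty ℤ₂-boundary) with winding vector N(X*) = 0 ∈ {0,1}^d, then X* is the ℤ₂-boundary of a region: there exists a set C of d-cells whose boundary is X*. Moreover, if X* is connected (any two facets joined by a chain of facets sharing (d−2)-cells) and is dual to a minimal cutset, then the complement of X* in the torus has exactly two connected components. -/
open Finset
open scoped Classical

/-- A `k`-cell of the discrete torus `(ℤ/nℤ)^d`: a base point together with the set of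
(at most `d`) directions it spans; the cardinality of the direction set is the dimension
of the cell. -/
abbrev Cell (d n : ℕ) := (Fin d → ZMod n) × Finset (Fin d)

/-- The `i`-th coordinate unit vector. -/
def unitVec {d n : ℕ} (i : Fin d) : Fin d → ZMod n := fun j => if j = i then 1 else 0

/-- The `2k` cells of dimension `k-1` in the boundary of a `k`-cell. -/
def cellBd {d n : ℕ} (c : Cell d n) : Finset (Cell d n) :=
  c.2.biUnion fun i => {(c.1, c.2.erase i), (c.1 + unitVec i, c.2.erase i)}

/-- The `ℤ₂`-boundary of a set `K` of cells: the cells lying in the boundary of an odd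
number of members of `K`. -/
noncomputable def z2bd {d n : ℕ} [NeZero n] (K : Finset (Cell d n)) :
    Finset (Cell d n) :=
  Finset.univ.filter fun f => Odd ((K.filter fun c => f ∈ cellBd c).card)

/-- The nearest-neighbor torus graph on `(ℤ/nℤ)^d`. -/
def torusGraph (n d : ℕ) : SimpleGraph (Fin d → ZMod n) where
  Adj x y := x ≠ y ∧ ∃ i, (∀ j, j ≠ i → x j = y j) ∧ (x = y + unitVec i ∨ y = x + unitVec i)
  symm := ⟨by
    rintro x y ⟨hxy, i, h1, h2⟩
    exact ⟨hxy.symm, i, fun j hj => (h1 j hj).symm, h2.symm⟩⟩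
  loopless := ⟨fun x h => h.1 rfl⟩


lemma walk_endpoint {V : Type*} {G H : SimpleGraph V} {a b : V}
    (hH : ∀ x y, G.Adj x y → s(x,y) ≠ s(a,b) → H.Adj x y)
    {v c : V} (p : G.Walk v c) :
    (H.Reachable v a ∨ H.Reachable v b) → (H.Reachable c a ∨ H.Reachable c b) := by
  induction p with
  | nil => exact id
  | @cons v u c h p ih =>
    intro hv
    apply ih
    by_cases hs : s(v, u) = s(a, b)
    · rw [Sym2.eq_iff] at hs
      rcases hs with ⟨_, h2⟩ | ⟨_, h2⟩
      · exact Or.inr (h2 ▸ SimpleGraph.Reachable.refl _)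
      · exact Or.inl (h2 ▸ SimpleGraph.Reachable.refl _)
    · have hadj : H.Adj v u := hH _ _ h hs
      rcases hv with h' | h'
      · exact Or.inl ((hadj.symm.reachable).trans h')
      · exact Or.inr ((hadj.symm.reachable).trans h')

lemma two_components {V : Type*} (G : SimpleGraph V)
    (D : Set (Sym2 V)) (hGconn : G.Connected)
    (hdis : ¬ (G.deleteEdges D).Connected)
    (hmin : ∀ D' ⊂ D, (G.deleteEdges D').Connected) :
    Nat.card (G.deleteEdges D).ConnectedComponent = 2 := by
  by_cases hED : ∃ e ∈ D, e ∈ G.edgeSet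
  · obtain ⟨e, heD, heE⟩ := hED
    induction e with
    | h a b =>
      set H := G.deleteEdges D with hHdef
      set G₁ := G.deleteEdges (D \ {s(a,b)}) with hG1
      have hG1conn : G₁.Connected := hmin _ (Set.sdiff_singleton_ssubset.mpr heD)
      have hH : ∀ x y, G₁.Adj x y → s(x,y) ≠ s(a,b) → H.Adj x y := by
        intro x y hxy hs
        rw [hG1, SimpleGraph.deleteEdges_adj] at hxy
        rw [hHdef, SimpleGraph.deleteEdges_adj]
        exact ⟨hxy.1, fun hmem => hxy.2 ⟨hmem, hs⟩⟩
      have hreach : ∀ v, H.Reachable v a ∨ H.Reachable v b := by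
        intro v
        obtain ⟨p⟩ := hG1conn.preconnected a v
        exact walk_endpoint hH p (Or.inl (SimpleGraph.Reachable.refl _))
      have hAB : H.connectedComponentMk a ≠ H.connectedComponentMk b := by
        intro hEq
        apply hdis
        have hr : H.Reachable a b := (SimpleGraph.ConnectedComponent.eq).1 hEq
        haveI : Nonempty V := ⟨a⟩
        refine ⟨fun u v => ?_⟩
        have hu := hreach u; have hv := hreach v
        rcases hu with hu | hu <;> rcases hv with hv | hv
        · exact hu.trans hv.symm
        · exact hu.trans (hr.trans hv.symm)
        · exact hu.trans (hr.symm.trans hv.symm)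
        · exact hu.trans hv.symm
      have huniv : (Set.univ : Set H.ConnectedComponent) =
          {H.connectedComponentMk a, H.connectedComponentMk b} := by
        ext c
        simp only [Set.mem_univ, true_iff, Set.mem_insert_iff, Set.mem_singleton_iff]
        induction c using SimpleGraph.ConnectedComponent.ind with
        | _ v =>
          rcases hreach v with h | h
          · exact Or.inl ((SimpleGraph.ConnectedComponent.eq).2 h)
          · exact Or.inr ((SimpleGraph.ConnectedComponent.eq).2 h)
      have h2 := Set.ncard_pair hAB
      rw [← huniv, Set.ncard_univ] at h2
      exact h2
  · exfalso
    apply hdis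
    have : G.deleteEdges D = G := by
      ext x y
      simp only [SimpleGraph.deleteEdges_adj, and_iff_left_iff_imp]
      intro hxy hmem
      exact hED ⟨_, hmem, hxy⟩
    rw [this]
    exact hGconn


lemma torus_reach_step {d n : ℕ} (x : Fin d → ZMod n) (i : Fin d) :
    (torusGraph n d).Reachable x (x + unitVec i) := by
  by_cases h : x = x + unitVec i
  · exact h ▸ SimpleGraph.Reachable.refl _
  · refine SimpleGraph.Adj.reachable (show x ≠ x + unitVec i ∧ ∃ i', (∀ j, j ≠ i' → x j = (x + unitVec i : Fin d → ZMod n) j) ∧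
      (x = (x + unitVec i) + unitVec i' ∨ x + unitVec i = x + unitVec i') from ⟨h, i, fun j hj => ?_, Or.inr rfl⟩)
    show x j = x j + (if j = i then 1 else 0)
    simp [hj]

lemma torus_reach_nsmul {d n : ℕ} (x : Fin d → ZMod n) (i : Fin d) (k : ℕ) :
    (torusGraph n d).Reachable x (x + k • unitVec i) := by
  induction k with
  | zero => simpa using SimpleGraph.Reachable.refl x
  | succ k ih =>
    have : x + (k+1) • unitVec i = (x + k • unitVec i) + unitVec i := by
      rw [succ_nsmul, add_assoc]
    rw [this]
    exact ih.trans (torus_reach_step _ i)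

lemma torus_connected (d n : ℕ) [NeZero n] : (torusGraph n d).Connected := by
  haveI : Nonempty (Fin d → ZMod n) := ⟨fun _ => 0⟩
  refine ⟨fun x y => ?_⟩
  suffices h : ∀ s : Finset (Fin d), ∀ x y : Fin d → ZMod n,
      (∀ j ∉ s, x j = y j) → (torusGraph n d).Reachable x y by
    exact h Finset.univ x y (fun j hj => absurd (Finset.mem_univ j) hj)
  intro s
  induction s using Finset.induction with
  | empty => intro x y h; exact (funext fun j => h j (Finset.notMem_empty j)) ▸ SimpleGraph.Reachable.refl _
  | @insert i s hi ih =>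
    intro x y h
    set z := x + ((y i - x i).val) • unitVec i with hz
    have hzj : ∀ j, z j = x j + (y i - x i).val • (if j = i then (1 : ZMod n) else 0) := fun j => rfl
    have hzi : z i = y i := by
      rw [hzj]
      simp [ZMod.natCast_val, ZMod.cast_id]
    have hzn : ∀ j, j ≠ i → z j = x j := by
      intro j hj; rw [hzj]; simp [hj]
    refine (torus_reach_nsmul x i _).trans (ih z y ?_)
    intro j hj
    by_cases hji : j = i
    · subst hji; exact hzi
    · rw [hzn j hji]
      exact h j (by simp [hji, hj])


/-- Truncation: keep coordinates `< m`, zero out the rest. -/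
def trunc {d n : ℕ} (v : Fin d → ZMod n) (m : ℕ) : Fin d → ZMod n :=
  fun j => if (j : ℕ) < m then v j else 0

lemma zmod2_add_self (a : ZMod 2) : a + a = 0 := by revert a; decide

lemma zmod2_neg (a : ZMod 2) : -a = a := by revert a; decide

lemma tel_range (U : ℕ → ZMod 2) (b : ℕ) :
    ∑ k ∈ Finset.range b, (U (k+1) + U k) = U b + U 0 := by
  have h : ∀ k, U (k+1) + U k = U (k+1) - U k := by
    intro k; rw [sub_eq_add_neg, zmod2_neg]
  simp_rw [h]
  rw [Finset.sum_range_sub, sub_eq_add_neg, zmod2_neg]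

lemma tel_Ico (U : ℕ → ZMod 2) {a b : ℕ} (h : a ≤ b) :
    ∑ k ∈ Finset.Ico a b, (U (k+1) + U k) = U b + U a := by
  have h' : ∀ k, U (k+1) + U k = U (k+1) - U k := by
    intro k; rw [sub_eq_add_neg, zmod2_neg]
  simp_rw [h']
  rw [Finset.sum_Ico_eq_sub _ h, Finset.sum_range_sub, Finset.sum_range_sub]
  have hsub : ∀ x y : ZMod 2, x - y = x + y := by decide
  rw [hsub, hsub, hsub]
  have h2 : ∀ p q r : ZMod 2, p + r + (q + r) = p + q := by decide
  exact h2 _ _ _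

lemma trunc_eq_of_agree {d n : ℕ} {u v : Fin d → ZMod n} {m : ℕ}
    (h : ∀ j : Fin d, (j : ℕ) < m → u j = v j) : trunc u m = trunc v m := by
  funext j
  unfold trunc
  by_cases hj : (j : ℕ) < m
  · rw [if_pos hj, if_pos hj, h j hj]
  · rw [if_neg hj, if_neg hj]

lemma trunc_succ {d n : ℕ} [NeZero n] (v : Fin d → ZMod n) (m : Fin d) :
    trunc v ↑m + ((v m).val) • unitVec m = trunc v (↑m + 1) := by
  funext j
  show (if (j:ℕ) < ↑m then v j else 0) + (v m).val • (if j = m then (1:ZMod n) else 0)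
      = if (j:ℕ) < ↑m + 1 then v j else 0
  by_cases hj : j = m
  · subst hj
    rw [if_neg (lt_irrefl _), if_pos (Nat.lt_succ_self _), if_pos rfl, zero_add,
      nsmul_eq_mul, mul_one, ZMod.natCast_val, ZMod.cast_id]
  · have hjm : (j : ℕ) ≠ (m : ℕ) := fun hc => hj (Fin.ext hc)
    rw [if_neg hj, smul_zero, add_zero]
    by_cases hlt : (j:ℕ) < ↑m
    · rw [if_pos hlt, if_pos (by omega)]
    · rw [if_neg hlt, if_neg (by omega)]

lemma trunc_eq_self {d n : ℕ} (v : Fin d → ZMod n) : trunc v d = v := by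
  funext j
  exact if_pos j.isLt

/-- The potential function: sum of crossings along the staircase path from 0 to `v`. -/
def pot {d n : ℕ} [NeZero n] (g : (Fin d → ZMod n) → Fin d → ZMod 2)
    (v : Fin d → ZMod n) : ZMod 2 :=
  ∑ m : Fin d, ∑ k ∈ Finset.range (v m).val, g (trunc v ↑m + k • unitVec m) m

lemma pot_diff {d n : ℕ} [NeZero n] (hn : 2 ≤ n)
    (g : (Fin d → ZMod n) → Fin d → ZMod 2)
    (hW : ∀ (v : Fin d → ZMod n) (i : Fin d),
      ∑ k ∈ Finset.range n, g (v + k • unitVec i) i = 0)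
    (hC : ∀ (v : Fin d → ZMod n) (i j : Fin d), i ≠ j →
      g v i + g (v + unitVec i) j = g v j + g (v + unitVec j) i)
    (v : Fin d → ZMod n) (i : Fin d) :
    pot g (v + unitVec i) + pot g v = g v i := by
  haveI : Fact (1 < n) := ⟨by omega⟩
  set w := v + unitVec i with hw
  have hwj : ∀ j, w j = v j + (if j = i then 1 else 0) := fun j => rfl
  have hwne : ∀ j, j ≠ i → w j = v j := by
    intro j hj; rw [hwj, if_neg hj, add_zero]
  have hwi : w i = v i + 1 := by rw [hwj, if_pos rfl]
  set U : ℕ → ZMod 2 := fun t => g (trunc v t) i with hU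
  set T : (Fin d → ZMod n) → Fin d → ZMod 2 := fun u m =>
    ∑ k ∈ Finset.range (u m).val, g (trunc u ↑m + k • unitVec m) m with hT
  have key : ∀ m : Fin d, T w m + T v m =
      if m = i then U (↑i+1) else if (i:ℕ) < ↑m then U (↑m+1) + U ↑m else 0 := by
    intro m
    by_cases hmi : m = i
    · subst hmi
      rw [if_pos rfl]
      have htr : trunc w ↑m = trunc v ↑m :=
        trunc_eq_of_agree (fun j hj => hwne j (fun hc => absurd (hc ▸ hj) (lt_irrefl _)))
      have haln : (v m).val < n := ZMod.val_lt _
      have hTv : T v m = ∑ k ∈ Finset.range (v m).val,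
          g (trunc v ↑m + k • unitVec m) m := rfl
      have hTw : T w m = ∑ k ∈ Finset.range (w m).val,
          g (trunc v ↑m + k • unitVec m) m := by
        show (∑ k ∈ Finset.range (w m).val, g (trunc w ↑m + k • unitVec m) m) = _
        rw [htr]
      have hsucc : trunc v ↑m + ((v m).val) • unitVec m = trunc v (↑m + 1) := trunc_succ v m
      have hUeq : U (↑m + 1) = g (trunc v (↑m+1)) m := rfl
      by_cases hwrap : (v m).val + 1 = n
      · -- wrap-around case
        have hval : (w m).val = 0 := by
          rw [hwi, ZMod.val_add, ZMod.val_one, hwrap, Nat.mod_self]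
        rw [hTw, hval, Finset.range_zero, Finset.sum_empty, zero_add, hTv]
        have hloop := hW (trunc v ↑m) m
        have hrg : Finset.range n = Finset.range ((v m).val + 1) := by rw [hwrap]
        rw [hrg, Finset.sum_range_succ] at hloop
        have hx : ∀ x y : ZMod 2, x + y = 0 → x = y := by decide
        rw [hx _ _ hloop, hsucc, hUeq]
      · have hval : (w m).val = (v m).val + 1 := by
          rw [hwi, ZMod.val_add, ZMod.val_one, Nat.mod_eq_of_lt (by omega)]
        rw [hTw, hval, Finset.sum_range_succ, hTv]
        have hx : ∀ S x : ZMod 2, S + x + S = x := by decide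
        rw [hx, hsucc, hUeq]
    · rw [if_neg hmi]
      by_cases him : (i:ℕ) < ↑m
      · rw [if_pos him]
        have hwm : w m = v m := hwne m hmi
        have htr : trunc w ↑m = trunc v ↑m + unitVec i := by
          funext j
          show (if (j:ℕ) < ↑m then w j else 0)
              = (if (j:ℕ) < ↑m then v j else 0) + (if j = i then 1 else 0)
          by_cases hj : (j:ℕ) < ↑m
          · rw [if_pos hj, if_pos hj, hwj]
          · rw [if_neg hj, if_neg hj, if_neg, add_zero]
            intro hc; subst hc; omega
        have hy_succ : ∀ k : ℕ, (trunc v ↑m + k • unitVec m) + unitVec m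
            = trunc v ↑m + (k+1) • unitVec m := by
          intro k; rw [add_assoc, ← succ_nsmul]
        have hTw : T w m = ∑ k ∈ Finset.range ((v m).val),
            g ((trunc v ↑m + k • unitVec m) + unitVec i) m := by
          show (∑ k ∈ Finset.range ((w m).val), g (trunc w ↑m + k • unitVec m) m) = _
          rw [hwm, htr]
          apply Finset.sum_congr rfl
          intro k _
          congr 1
          rw [add_right_comm]
        have hTv : T v m = ∑ k ∈ Finset.range ((v m).val),
            g (trunc v ↑m + k • unitVec m) m := rfl
        rw [hTw, hTv, ← Finset.sum_add_distrib]
        have hstep : ∀ k : ℕ, g ((trunc v ↑m + k • unitVec m) + unitVec i) m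
            + g (trunc v ↑m + k • unitVec m) m
            = g (trunc v ↑m + (k+1) • unitVec m) i + g (trunc v ↑m + k • unitVec m) i := by
          intro k
          have h4 := hC (trunc v ↑m + k • unitVec m) i m (fun hc => hmi (hc.symm))
          have hx : ∀ p q r s : ZMod 2, p + q = r + s → q + r = s + p := by decide
          rw [← hy_succ k]
          exact hx _ _ _ _ h4
        simp_rw [hstep]
        rw [tel_range (fun k => g (trunc v ↑m + k • unitVec m) i) ((v m).val)]
        have hy0 : trunc v ↑m + (0:ℕ) • unitVec m = trunc v ↑m := by
          rw [zero_nsmul, add_zero]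
        rw [hy0, trunc_succ v m]
      · rw [if_neg him]
        have hmlt : (m:ℕ) < ↑i := by
          rcases Nat.lt_trichotomy (m:ℕ) (i:ℕ) with h | h | h
          · exact h
          · exact absurd (Fin.ext h) hmi
          · exact absurd h him
        have htr : trunc w ↑m = trunc v ↑m :=
          trunc_eq_of_agree (fun j hj => hwne j (fun hc => by subst hc; omega))
        have hwm : w m = v m := hwne m hmi
        have : T w m = T v m := by
          show (∑ k ∈ Finset.range ((w m).val), g (trunc w ↑m + k • unitVec m) m) = _
          rw [hwm, htr]
        rw [this, zmod2_add_self]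
  -- now sum up
  have hpot : pot g w + pot g v = ∑ m : Fin d, (T w m + T v m) := by
    rw [Finset.sum_add_distrib]; rfl
  rw [hpot]
  simp_rw [key]
  rw [← Finset.add_sum_erase _ _ (Finset.mem_univ i), if_pos rfl]
  have herase : ∀ m ∈ Finset.univ.erase i,
      (if m = i then U (↑i+1) else if (i:ℕ) < ↑m then U (↑m+1) + U ↑m else 0)
      = if (i:ℕ) < ↑m then U (↑m+1) + U ↑m else 0 := by
    intro m hm
    rw [if_neg (Finset.mem_erase.1 hm).1]
  rw [Finset.sum_congr rfl herase, ← Finset.sum_filter]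
  have hfil : (Finset.univ.erase i).filter (fun m : Fin d => (i:ℕ) < ↑m)
      = Finset.univ.filter (fun m : Fin d => (i:ℕ) < ↑m) := by
    ext m
    simp only [Finset.mem_filter, Finset.mem_erase, Finset.mem_univ, true_and, and_true]
    constructor
    · rintro ⟨_, h⟩; exact h
    · intro h; exact ⟨fun hc => by subst hc; omega, h⟩
  rw [hfil]
  have hbij : ∑ m ∈ Finset.univ.filter (fun m : Fin d => (i:ℕ) < ↑m), (U (↑m+1) + U ↑m)
      = ∑ t ∈ Finset.Ico ((i:ℕ)+1) d, (U (t+1) + U t) := by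
    refine Finset.sum_bij' (fun (m : Fin d) (_ : m ∈ Finset.univ.filter
        (fun m : Fin d => (i:ℕ) < ↑m)) => (m : ℕ))
      (fun (t : ℕ) (ht : t ∈ Finset.Ico ((i:ℕ)+1) d) =>
        (⟨t, (Finset.mem_Ico.1 ht).2⟩ : Fin d)) ?_ ?_ ?_ ?_ ?_
    · intro m hm
      simp only [Finset.mem_filter, Finset.mem_univ, true_and] at hm
      show (m:ℕ) ∈ Finset.Ico ((i:ℕ)+1) d
      exact Finset.mem_Ico.2 ⟨by omega, m.isLt⟩
    · intro t ht
      simp only [Finset.mem_filter, Finset.mem_univ, true_and]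
      exact (Finset.mem_Ico.1 ht).1
    · intro m hm; exact Fin.ext rfl
    · intro t ht; rfl
    · intro m hm; rfl
  rw [hbij, tel_Ico U (by omega : (i:ℕ)+1 ≤ d)]
  have hUd : U d = g v i := by
    show g (trunc v d) i = g v i
    rw [trunc_eq_self]
  rw [hUd]
  have hfin : ∀ x y : ZMod 2, x + (y + x) = y := by decide
  exact hfin _ _
lemma erase_univ_inj {d : ℕ} {i j : Fin d}
    (h : (Finset.univ.erase i : Finset (Fin d)) = Finset.univ.erase j) : i = j := by
  by_contra hij
  have h1 : i ∈ Finset.univ.erase j := Finset.mem_erase.2 ⟨hij, Finset.mem_univ _⟩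
  rw [← h] at h1
  exact (Finset.mem_erase.1 h1).1 rfl

lemma exists_erase {d : ℕ} (S : Finset (Fin d)) (hS : S.card = d - 1) (hd : 1 ≤ d) :
    ∃ i, S = Finset.univ.erase i := by
  have hcompl : Sᶜ.card = 1 := by
    rw [Finset.card_compl, hS]
    simp only [Fintype.card_fin]
    omega
  obtain ⟨i, hi⟩ := Finset.card_eq_one.1 hcompl
  refine ⟨i, ?_⟩
  rw [← compl_compl S, hi, Finset.compl_singleton]

lemma even_cast_zmod2 {N : ℕ} (h : Even N) : (N : ZMod 2) = 0 := by
  rw [← ZMod.natCast_mod N 2, Nat.even_iff.1 h, Nat.cast_zero]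

lemma odd_iff_zmod2 (N : ℕ) : Odd N ↔ (N : ZMod 2) = 1 := by
  rw [Nat.odd_iff, ← ZMod.natCast_mod N 2]
  rcases Nat.mod_two_eq_zero_or_one N with h | h <;> rw [h] <;> simp

/-- The crossing indicator: `chi X v i = 1` iff the facet between the cell at `v` and the
cell at `v + eᵢ` belongs to `X`. -/
noncomputable def chi {d n : ℕ} [NeZero n] (X : Finset (Cell d n))
    (v : Fin d → ZMod n) (i : Fin d) : ZMod 2 :=
  if (v + unitVec i, Finset.univ.erase i) ∈ X then 1 else 0

lemma nsmul_unitVec_self {d n : ℕ} (i : Fin d) : (n • unitVec i : Fin d → ZMod n) = 0 := by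
  funext j
  show n • (if j = i then (1 : ZMod n) else 0) = 0
  by_cases hj : j = i
  · rw [if_pos hj, nsmul_eq_mul, mul_one, ZMod.natCast_self]
  · rw [if_neg hj, smul_zero]

lemma chi_hW {d n : ℕ} [NeZero n] (X : Finset (Cell d n))
    (hwind : ∀ (p : Fin d → ZMod n) (i : Fin d),
      Even ((X.filter fun c =>
        c.2 = Finset.univ.erase i ∧ ∀ j, j ≠ i → c.1 j = p j).card))
    (v : Fin d → ZMod n) (i : Fin d) :
    ∑ k ∈ Finset.range n, chi X (v + k • unitVec i) i = 0 := by
  set φ : ℕ → ZMod 2 := fun k =>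
    if (v + k • unitVec i, Finset.univ.erase i) ∈ X then 1 else 0 with hφ
  have hchi : ∀ k : ℕ, chi X (v + k • unitVec i) i = φ (k + 1) := by
    intro k
    unfold chi
    rw [hφ]
    simp only []
    congr 2
    rw [add_assoc, ← succ_nsmul]
  simp_rw [hchi]
  have hshift : ∑ k ∈ Finset.range n, φ (k + 1) = ∑ k ∈ Finset.range n, φ k := by
    have h1 := Finset.sum_range_succ' φ n
    have h2 := Finset.sum_range_succ φ n
    have hφn : φ n = φ 0 := by
      rw [hφ]
      simp only []
      rw [nsmul_unitVec_self, zero_nsmul]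
    rw [h2, hφn] at h1
    -- h1 : ∑ range n φ + φ 0 = ∑ range n (φ ∘ succ) + φ 0
    have hx : ∀ a b c : ZMod 2, a + c = b + c → b = a := by decide
    exact hx _ _ _ h1
  rw [hshift]
  have hsum : ∑ k ∈ Finset.range n, φ k
      = (((Finset.range n).filter
          (fun k => (v + k • unitVec i, Finset.univ.erase i) ∈ X)).card : ZMod 2) := by
    rw [hφ, Finset.sum_boole]
  rw [hsum]
  have hcard : ((Finset.range n).filter
        (fun k => (v + k • unitVec i, Finset.univ.erase i) ∈ X)).card
      = ((X.filter fun c =>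
        c.2 = Finset.univ.erase i ∧ ∀ j, j ≠ i → c.1 j = v j).card) := by
    apply Finset.card_bij (fun (k : ℕ) _ =>
      ((v + k • unitVec i, Finset.univ.erase i) : Cell d n))
    · intro k hk
      rw [Finset.mem_filter] at hk
      refine Finset.mem_filter.2 ⟨hk.2, rfl, fun j hj => ?_⟩
      show v j + k • (if j = i then (1:ZMod n) else 0) = v j
      rw [if_neg hj, smul_zero, add_zero]
    · intro k hk k' hk' heq
      rw [Finset.mem_filter, Finset.mem_range] at hk hk'
      have := congrFun (congrArg Prod.fst heq) i
      simp only [] at this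
      have h1 : v i + k • (if i = i then (1:ZMod n) else 0)
          = v i + k' • (if i = i then (1:ZMod n) else 0) := this
      rw [if_pos rfl, nsmul_eq_mul, mul_one, nsmul_eq_mul, mul_one] at h1
      have h2 : (k : ZMod n) = (k' : ZMod n) := by
        exact add_left_cancel h1
      have := congrArg ZMod.val h2
      rwa [ZMod.val_cast_of_lt hk.1, ZMod.val_cast_of_lt hk'.1] at this
    · intro c hc
      simp only [Finset.mem_filter] at hc
      obtain ⟨hcX, hc2, hc1⟩ := hc
      refine ⟨(c.1 i - v i).val, ?_, ?_⟩
      · simp only [Finset.mem_filter, Finset.mem_range]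
        constructor
        · exact ZMod.val_lt _
        · have : (v + ((c.1 i - v i).val : ℕ) • unitVec i, Finset.univ.erase i) = c := by
            refine Prod.ext ?_ hc2.symm
            funext j
            show v j + ((c.1 i - v i).val : ℕ) • (if j = i then (1:ZMod n) else 0) = c.1 j
            by_cases hj : j = i
            · subst hj
              rw [if_pos rfl, nsmul_eq_mul, mul_one, ZMod.natCast_val, ZMod.cast_id,
                add_sub_cancel]
            · rw [if_neg hj, smul_zero, add_zero, hc1 j hj]
          rw [this]
          exact hcX
      · refine Prod.ext ?_ hc2.symm
        funext j
        show v j + ((c.1 i - v i).val : ℕ) • (if j = i then (1:ZMod n) else 0) = c.1 j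
        by_cases hj : j = i
        · subst hj
          rw [if_pos rfl, nsmul_eq_mul, mul_one, ZMod.natCast_val, ZMod.cast_id,
            add_sub_cancel]
        · rw [if_neg hj, smul_zero, add_zero, hc1 j hj]
  rw [hcard]
  exact even_cast_zmod2 (hwind v i)
lemma unitVec_ne_zero {d n : ℕ} [NeZero n] (hn : 2 ≤ n) (i : Fin d) :
    (unitVec i : Fin d → ZMod n) ≠ 0 := by
  haveI : Fact (1 < n) := ⟨by omega⟩
  intro h
  have := congrFun h i
  rw [show (unitVec i : Fin d → ZMod n) i = 1 from if_pos rfl] at this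
  exact one_ne_zero this

lemma double_erase {d : ℕ} {i j m k : Fin d} (hij : i ≠ j) (hkm : k ≠ m)
    (h : ((Finset.univ.erase i).erase j : Finset (Fin d)) = (Finset.univ.erase m).erase k) :
    (m = i ∧ k = j) ∨ (m = j ∧ k = i) := by
  have hmem : ∀ x : Fin d, (x ≠ j ∧ x ≠ i) ↔ (x ≠ k ∧ x ≠ m) := by
    intro x
    have := Finset.ext_iff.1 h x
    simp only [Finset.mem_erase, Finset.mem_univ, and_true] at this
    exact this
  have hi : i = k ∨ i = m := by
    by_contra hc
    push_neg at hc
    exact ((hmem i).2 ⟨hc.1, hc.2⟩).2 rfl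
  have hj : j = k ∨ j = m := by
    by_contra hc
    push_neg at hc
    exact ((hmem j).2 ⟨hc.1, hc.2⟩).1 rfl
  rcases hi with hi | hi <;> rcases hj with hj | hj
  · exact absurd (hi.trans hj.symm) hij
  · exact Or.inr ⟨hj.symm, hi.symm⟩
  · exact Or.inl ⟨hi.symm, hj.symm⟩
  · exact absurd (hi.trans hj.symm) hij

lemma chi_hC {d n : ℕ} [NeZero n] (hn : 2 ≤ n) (hd : 1 ≤ d)
    (X : Finset (Cell d n))
    (hfacet : ∀ c ∈ X, c.2.card = d - 1)
    (hclosed : z2bd X = ∅)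
    (v : Fin d → ZMod n) (i j : Fin d) (hij : i ≠ j) :
    chi X v i + chi X (v + unitVec i) j = chi X v j + chi X (v + unitVec j) i := by
  set A : Cell d n := (v + unitVec i, Finset.univ.erase i) with hA
  set B : Cell d n := (v + unitVec i + unitVec j, Finset.univ.erase j) with hB
  set C : Cell d n := (v + unitVec j, Finset.univ.erase j) with hC'
  set Dc : Cell d n := (v + unitVec i + unitVec j, Finset.univ.erase i) with hDc
  set cell2 : Cell d n :=
    (v + unitVec i + unitVec j, (Finset.univ.erase i).erase j) with hcell2
  -- distinctness
  have hAB : A ≠ B := fun h => hij (erase_univ_inj (congrArg Prod.snd h))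
  have hAC : A ≠ C := fun h => hij (erase_univ_inj (congrArg Prod.snd h))
  have hADc : A ≠ Dc := by
    intro h
    have h1 : v + unitVec i = v + unitVec i + unitVec j := congrArg Prod.fst h
    exact unitVec_ne_zero hn j ((left_eq_add).1 h1)
  have hBC : B ≠ C := by
    intro h
    have h1 : v + unitVec i + unitVec j = v + unitVec j := congrArg Prod.fst h
    rw [add_right_comm] at h1
    exact unitVec_ne_zero hn i ((add_eq_left).1 h1)
  have hBDc : B ≠ Dc := fun h => hij ((erase_univ_inj (congrArg Prod.snd h)).symm)
  have hCDc : C ≠ Dc := fun h => hij ((erase_univ_inj (congrArg Prod.snd h)).symm)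
  -- the even-count hypothesis
  have heven : Even ((X.filter fun c => cell2 ∈ cellBd c).card) := by
    have h1 : cell2 ∉ z2bd X := by rw [hclosed]; exact Finset.notMem_empty _
    rw [z2bd, Finset.mem_filter] at h1
    push_neg at h1
    exact Nat.not_odd_iff_even.1 (h1 (Finset.mem_univ _))
  -- membership characterization
  have hchar : ∀ c ∈ X, (cell2 ∈ cellBd c ↔ (c = A ∨ c = B ∨ c = C ∨ c = Dc)) := by
    intro c hcX
    obtain ⟨m, hm⟩ := exists_erase c.2 (hfacet c hcX) hd
    constructor
    · intro hmem
      rw [cellBd, Finset.mem_biUnion] at hmem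
      obtain ⟨k, hk, hkmem⟩ := hmem
      simp only [Finset.mem_insert, Finset.mem_singleton] at hkmem
      have hkm : k ≠ m := by
        rw [hm] at hk; exact (Finset.mem_erase.1 hk).1
      have hsnd : ((Finset.univ.erase i).erase j : Finset (Fin d))
          = (Finset.univ.erase m).erase k := by
        rcases hkmem with h | h
        · have := congrArg Prod.snd h
          rw [hm] at this
          exact this
        · have := congrArg Prod.snd h
          rw [hm] at this
          exact this
      rcases double_erase hij hkm hsnd with ⟨hmi, hkj⟩ | ⟨hmj, hki⟩
      · rw [hmi] at hm
        rw [hkj] at hkmem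
        rcases hkmem with h | h
        · refine Or.inr (Or.inr (Or.inr ?_))
          have h1 : v + unitVec i + unitVec j = c.1 := congrArg Prod.fst h
          exact (Prod.ext_iff.2 ⟨h1.symm, hm⟩)
        · refine Or.inl ?_
          have h1 : v + unitVec i + unitVec j = c.1 + unitVec j := congrArg Prod.fst h
          have h2 : c.1 = v + unitVec i := (add_right_cancel h1).symm
          exact (Prod.ext_iff.2 ⟨h2, hm⟩)
      · rw [hmj] at hm
        rw [hki] at hkmem
        rcases hkmem with h | h
        · refine Or.inr (Or.inl ?_)
          have h1 : v + unitVec i + unitVec j = c.1 := congrArg Prod.fst h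
          exact (Prod.ext_iff.2 ⟨h1.symm, hm⟩)
        · refine Or.inr (Or.inr (Or.inl ?_))
          have h1 : v + unitVec i + unitVec j = c.1 + unitVec i := congrArg Prod.fst h
          rw [add_right_comm] at h1
          have h2 : c.1 = v + unitVec j := (add_right_cancel h1).symm
          exact (Prod.ext_iff.2 ⟨h2, hm⟩)
    · intro hor
      rcases hor with rfl | rfl | rfl | rfl
      · rw [cellBd, Finset.mem_biUnion]
        refine ⟨j, Finset.mem_erase.2 ⟨Ne.symm hij, Finset.mem_univ _⟩, ?_⟩
        exact Finset.mem_insert.2 (Or.inr (Finset.mem_singleton.2 rfl))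
      · rw [cellBd, Finset.mem_biUnion]
        refine ⟨i, Finset.mem_erase.2 ⟨hij, Finset.mem_univ _⟩, ?_⟩
        exact Finset.mem_insert.2 (Or.inl (Prod.ext_iff.2 ⟨rfl, Finset.erase_right_comm⟩))
      · rw [cellBd, Finset.mem_biUnion]
        refine ⟨i, Finset.mem_erase.2 ⟨hij, Finset.mem_univ _⟩, ?_⟩
        refine Finset.mem_insert.2 (Or.inr (Finset.mem_singleton.2
          (Prod.ext_iff.2 ⟨?_, Finset.erase_right_comm⟩)))
        exact add_right_comm v (unitVec i) (unitVec j)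
      · rw [cellBd, Finset.mem_biUnion]
        refine ⟨j, Finset.mem_erase.2 ⟨Ne.symm hij, Finset.mem_univ _⟩, ?_⟩
        exact Finset.mem_insert.2 (Or.inl rfl)
  -- turn the even count into a `ZMod 2` identity
  have h0 : ∑ c ∈ X, (if cell2 ∈ cellBd c then (1 : ZMod 2) else 0) = 0 := by
    rw [Finset.sum_boole]
    exact even_cast_zmod2 heven
  have hpw : ∀ c ∈ X, (if cell2 ∈ cellBd c then (1 : ZMod 2) else 0)
      = (if c = A then (1:ZMod 2) else 0) + (if c = B then 1 else 0)
        + (if c = C then 1 else 0) + (if c = Dc then 1 else 0) := by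
    intro c hc
    by_cases h1 : c = A
    · subst h1
      rw [if_pos ((hchar _ hc).2 (Or.inl rfl)), if_pos rfl, if_neg hAB, if_neg hAC,
        if_neg hADc]
      decide
    by_cases h2 : c = B
    · subst h2
      rw [if_pos ((hchar _ hc).2 (Or.inr (Or.inl rfl))), if_neg (fun h => hAB h.symm),
        if_pos rfl, if_neg hBC, if_neg hBDc]
      decide
    by_cases h3 : c = C
    · subst h3
      rw [if_pos ((hchar _ hc).2 (Or.inr (Or.inr (Or.inl rfl)))),
        if_neg (fun h => hAC h.symm), if_neg (fun h => hBC h.symm), if_pos rfl,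
        if_neg hCDc]
      decide
    by_cases h4 : c = Dc
    · subst h4
      rw [if_pos ((hchar _ hc).2 (Or.inr (Or.inr (Or.inr rfl)))),
        if_neg (fun h => hADc h.symm), if_neg (fun h => hBDc h.symm),
        if_neg (fun h => hCDc h.symm), if_pos rfl]
      decide
    · rw [if_neg (fun hmem => by
        rcases (hchar _ hc).1 hmem with h | h | h | h
        exacts [h1 h, h2 h, h3 h, h4 h]), if_neg h1, if_neg h2, if_neg h3, if_neg h4]
      decide
  rw [Finset.sum_congr rfl hpw] at h0
  rw [Finset.sum_add_distrib, Finset.sum_add_distrib, Finset.sum_add_distrib,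
    Finset.sum_ite_eq' X A, Finset.sum_ite_eq' X B, Finset.sum_ite_eq' X C,
    Finset.sum_ite_eq' X Dc] at h0
  have hgoal : ∀ a b c e : ZMod 2, a + b + c + e = 0 → a + b = c + e := by decide
  have := hgoal _ _ _ _ h0
  show (if A ∈ X then (1:ZMod 2) else 0) + chi X (v + unitVec i) j
      = chi X v j + chi X (v + unitVec j) i
  have e2 : chi X (v + unitVec i) j = (if B ∈ X then (1:ZMod 2) else 0) := rfl
  have e3 : chi X v j = (if C ∈ X then (1:ZMod 2) else 0) := rfl
  have e4 : chi X (v + unitVec j) i = (if Dc ∈ X then (1:ZMod 2) else 0) := by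
    show (if (v + unitVec j + unitVec i, Finset.univ.erase i) ∈ X then (1:ZMod 2) else 0) = _
    rw [add_right_comm]
  rw [e2, e3, e4]
  exact this
/-- in the `d`-dimensional (half-integer) torus, a closed surface (a set of
`(d-1)`-cells with empty `ℤ₂`-boundary) whose `ℤ₂`-winding vector vanishes (every
fundamental lattice loop crosses it an even number of times) bounds: it is the
`ℤ₂`-boundary of a set of `d`-cells.  Moreover, if the surface is connected (facets glued
along shared `(d-2)`-cells) and its dual edge set is a minimal cutset of the torus graph,
then its complement has exactly two connected components. -/
theorem stmt_15 (d n : ℕ) [NeZero n] (hd : 1 ≤ d)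
    (X : Finset (Cell d n))
    (hfacet : ∀ c ∈ X, c.2.card = d - 1)
    (hclosed : z2bd X = ∅)
    (hwind : ∀ (p : Fin d → ZMod n) (i : Fin d),
      Even ((X.filter fun c =>
        c.2 = Finset.univ.erase i ∧ ∀ j, j ≠ i → c.1 j = p j).card)) :
    (∃ Cset : Finset (Cell d n),
      (∀ c ∈ Cset, c.2 = Finset.univ) ∧ z2bd Cset = X) ∧
    (∀ Ddual : Set (Sym2 (Fin d → ZMod n)),
      Ddual = {e | ∃ c ∈ X, ∃ i, i ∉ c.2 ∧ e = s(c.1, c.1 + unitVec i)} →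
      -- X is connected: any two facets of X are joined by a chain of facets of X
      -- successively sharing a boundary (d-2)-cell
      (∀ a ∈ X, ∀ b ∈ X, Relation.ReflTransGen
        (fun u v : Cell d n => u ∈ X ∧ v ∈ X ∧ u ≠ v ∧ (cellBd u ∩ cellBd v).Nonempty)
        a b) →
      -- the dual edge set is a minimal cutset of the torus graph
      ¬ ((torusGraph n d).deleteEdges Ddual).Connected →
      (∀ D' ⊂ Ddual, ((torusGraph n d).deleteEdges D').Connected) →
      Nat.card ((torusGraph n d).deleteEdges Ddual).ConnectedComponent = 2) := by
  constructor
  · -- Part 1: the surface bounds.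
    by_cases hn : 2 ≤ n
    · -- main case
      haveI : Fact (1 < n) := ⟨by omega⟩
      set g := chi X with hg
      have hW := chi_hW X hwind
      have hC := chi_hC hn hd X hfacet hclosed
      refine ⟨Finset.univ.filter (fun c : Cell d n =>
        c.2 = Finset.univ ∧ pot (chi X) c.1 = 1), fun c hc => (Finset.mem_filter.1 hc).2.1, ?_⟩
      set Cset := Finset.univ.filter (fun c : Cell d n =>
        c.2 = Finset.univ ∧ pot (chi X) c.1 = 1) with hCset
      ext c
      obtain ⟨q, S⟩ := c
      rw [z2bd, Finset.mem_filter]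
      simp only [Finset.mem_univ, true_and]
      by_cases hS : ∃ i, S = Finset.univ.erase i
      · obtain ⟨i, rfl⟩ := hS
        rw [odd_iff_zmod2, ← Finset.sum_boole]
        have hqne : ((q, Finset.univ) : Cell d n) ≠ (q - unitVec i, Finset.univ) := by
          intro h
          have h1 : q = q - unitVec i := congrArg Prod.fst h
          exact unitVec_ne_zero hn i (sub_eq_self.1 h1.symm)
        have hpw : ∀ c' ∈ Cset, (if ((q, Finset.univ.erase i) : Cell d n) ∈ cellBd c'
              then (1:ZMod 2) else 0)
            = (if c' = ((q, Finset.univ) : Cell d n) then (1:ZMod 2) else 0)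
              + (if c' = ((q - unitVec i, Finset.univ) : Cell d n) then 1 else 0) := by
          intro c' hc'
          have hc2 : c'.2 = Finset.univ := (Finset.mem_filter.1 hc').2.1
          have hiff : ((q, Finset.univ.erase i) : Cell d n) ∈ cellBd c'
              ↔ (c' = ((q, Finset.univ) : Cell d n)
                ∨ c' = ((q - unitVec i, Finset.univ) : Cell d n)) := by
            constructor
            · intro hmem
              rw [cellBd, Finset.mem_biUnion] at hmem
              obtain ⟨k, hk, hkmem⟩ := hmem
              simp only [Finset.mem_insert, Finset.mem_singleton] at hkmem
              have hsk : ∀ p : Fin d → ZMod n,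
                  ((q, Finset.univ.erase i) : Cell d n) = (p, c'.2.erase k) →
                  k = i ∧ q = p := by
                intro p hp
                have h2 := congrArg Prod.snd hp
                rw [hc2] at h2
                have h1 := congrArg Prod.fst hp
                exact ⟨(erase_univ_inj h2).symm, h1⟩
              rcases hkmem with h | h
              · obtain ⟨hki, hq⟩ := hsk _ h
                exact Or.inl (Prod.ext_iff.2 ⟨hq.symm, hc2⟩)
              · obtain ⟨hki, hq⟩ := hsk _ h
                rw [hki] at hq
                refine Or.inr (Prod.ext_iff.2 ⟨?_, hc2⟩)
                exact eq_sub_of_add_eq hq.symm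
            · intro hor
              rcases hor with rfl | rfl
              · rw [cellBd, Finset.mem_biUnion]
                exact ⟨i, Finset.mem_univ _, Finset.mem_insert.2 (Or.inl rfl)⟩
              · rw [cellBd, Finset.mem_biUnion]
                refine ⟨i, Finset.mem_univ _, Finset.mem_insert.2 (Or.inr
                  (Finset.mem_singleton.2 (Prod.ext_iff.2 ⟨?_, rfl⟩)))⟩
                rw [sub_add_cancel]
          by_cases h1 : c' = ((q, Finset.univ) : Cell d n)
          · subst h1
            rw [if_pos (hiff.2 (Or.inl rfl)), if_pos rfl, if_neg hqne]
            decide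
          by_cases h2 : c' = ((q - unitVec i, Finset.univ) : Cell d n)
          · subst h2
            rw [if_pos (hiff.2 (Or.inr rfl)), if_neg (fun h => hqne h.symm), if_pos rfl]
            decide
          · rw [if_neg (fun hmem => by rcases hiff.1 hmem with h | h; exacts [h1 h, h2 h]),
              if_neg h1, if_neg h2]
            decide
        rw [Finset.sum_congr rfl hpw, Finset.sum_add_distrib,
          Finset.sum_ite_eq' Cset ((q, Finset.univ) : Cell d n),
          Finset.sum_ite_eq' Cset ((q - unitVec i, Finset.univ) : Cell d n)]
        have hmemC : ∀ u : Fin d → ZMod n,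
            (if ((u, Finset.univ) : Cell d n) ∈ Cset then (1:ZMod 2) else 0)
            = pot (chi X) u := by
          intro u
          rw [hCset]
          by_cases hu : pot (chi X) u = 1
          · rw [if_pos (Finset.mem_filter.2 ⟨Finset.mem_univ _, rfl, hu⟩), hu]
          · rw [if_neg (fun h => hu (Finset.mem_filter.1 h).2.2)]
            have : ∀ a : ZMod 2, a ≠ 1 → a = 0 := by decide
            rw [this _ hu]
        rw [hmemC, hmemC]
        have hkey := pot_diff hn (chi X) hW hC (q - unitVec i) i
        rw [sub_add_cancel] at hkey
        rw [hkey]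
        show (if (q - unitVec i + unitVec i, Finset.univ.erase i) ∈ X then (1:ZMod 2) else 0)
            = 1 ↔ _
        rw [sub_add_cancel]
        by_cases hqX : ((q, Finset.univ.erase i) : Cell d n) ∈ X
        · simp [hqX]
        · rw [if_neg hqX]
          constructor
          · intro h; exact absurd h (by decide)
          · intro h; exact (hqX h).elim
      · -- `S` is not of facet shape: both sides are false
        constructor
        · intro hodd
          exfalso
          have hfil : Cset.filter
              (fun c' => ((q, S) : Cell d n) ∈ cellBd c') = ∅ := by
            apply Finset.filter_false_of_mem
            intro c' hc'
            intro hmem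
            rw [cellBd, Finset.mem_biUnion] at hmem
            obtain ⟨k, hk, hkmem⟩ := hmem
            simp only [Finset.mem_insert, Finset.mem_singleton] at hkmem
            have hc2 : c'.2 = Finset.univ := (Finset.mem_filter.1 hc').2.1
            rcases hkmem with h | h
            · exact hS ⟨k, by have := congrArg Prod.snd h; rw [hc2] at this; exact this⟩
            · exact hS ⟨k, by have := congrArg Prod.snd h; rw [hc2] at this; exact this⟩
          rw [hfil] at hodd
          simp at hodd
        · intro hcX
          exact (hS (exists_erase S (hfacet _ hcX) hd)).elim
    · -- degenerate case `n = 1`: `X` must be empty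
      have hn1 : n = 1 := by
        have := NeZero.pos n
        omega
      subst hn1
      have hX : X = ∅ := by
        rw [Finset.eq_empty_iff_forall_notMem]
        intro c hc
        obtain ⟨i, hi⟩ := exists_erase c.2 (hfacet c hc) hd
        have heven := hwind c.1 i
        set F := X.filter (fun c' =>
          c'.2 = Finset.univ.erase i ∧ ∀ j, j ≠ i → c'.1 j = c.1 j) with hF
        have hcF : c ∈ F := Finset.mem_filter.2 ⟨hc, hi, fun j _ => rfl⟩
        have hle : F.card ≤ 1 := by
          rw [Finset.card_le_one]
          intro a ha b hb
          refine Prod.ext_iff.2 ⟨?_, ?_⟩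
          · funext j; exact Subsingleton.elim _ _
          · rw [(Finset.mem_filter.1 ha).2.1, (Finset.mem_filter.1 hb).2.1]
        have hpos : 0 < F.card := Finset.card_pos.2 ⟨c, hcF⟩
        rw [Nat.even_iff] at heven
        omega
      refine ⟨∅, fun c hc => absurd hc (Finset.notMem_empty _), ?_⟩
      rw [hX, z2bd]
      apply Finset.filter_false_of_mem
      intro c _
      simp
  · -- Part 2: minimal cutset gives exactly two components.
    intro Ddual _ _ hdis hmin
    exact two_components _ _ (torus_connected d n) hdis hmin
end
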